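/- arXiv:2403.13449 — 2 statements merged into one kernel-verified Lean document; each statement's English description precedes it below -/
import Mathlib

section
/- If x is an upper (resp. lower) characteristic Sturmian word, then S(L_0(x)) and S(L_1(x)) are both upper (resp. lower) characteristic Sturmian words. -/
open scoped ENat Classical

/-- The length-`n` factor of the bi-infinite word `x` starting at position `i`. -/
def subwordZ {A : Type*} (x : ℤ → A) (i : ℤ) (n : ℕ) : List A :=
  (List.range n).map fun j => x (i + (j : ℤ))

/-- `w` occurs in `x` at position `i`. -/
def occursAt {A : Type*} (x : ℤ → A) (w : List A) (i : ℤ) : Prop :=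
  subwordZ x i w.length = w

/-- `w` is a factor of the bi-infinite word `x`. -/
def IsFactorZ {A : Type*} (x : ℤ → A) (w : List A) : Prop :=
  ∃ i : ℤ, occursAt x w i

/-- `Γ` is a string attractor of the bi-infinite word `x`: every nonempty factor
has an occurrence crossing a position of `Γ`. -/
def IsAttractorZ {A : Type*} (x : ℤ → A) (Γ : Set ℤ) : Prop :=
  ∀ w : List A, w ≠ [] → IsFactorZ x w →
    ∃ i : ℤ, occursAt x w i ∧ ∃ p ∈ Γ, i ≤ p ∧ p < i + (w.length : ℤ)

/-- The span `sup Γ - inf Γ` of a set of integers (`⊤` when unbounded). -/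
noncomputable def setSpan (Γ : Set ℤ) : ℕ∞ :=
  ⨆ a ∈ Γ, ⨆ b ∈ Γ, ((b - a).toNat : ℕ∞)

/-- The string attractor span of a bi-infinite word. -/
noncomputable def wordSpan {A : Type*} (x : ℤ → A) : ℕ∞ :=
  ⨅ Γ ∈ {Γ : Set ℤ | IsAttractorZ x Γ}, setSpan Γ

/-- The factor complexity of a bi-infinite word. -/
noncomputable def complexityZ {A : Type*} (x : ℤ → A) (n : ℕ) : ℕ :=
  Nat.card {w : List A // w.length = n ∧ IsFactorZ x w}

/-- The shift `S^k`. -/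
def shiftZ {A : Type*} (k : ℤ) (x : ℤ → A) : ℤ → A := fun i => x (i + k)

def PositivelyPeriodicZ {A : Type*} (x : ℤ → A) : Prop :=
  ∃ (N : ℤ) (p : ℕ), 1 ≤ p ∧ ∀ n : ℤ, N ≤ n → x n = x (n + (p : ℤ))

def NegativelyPeriodicZ {A : Type*} (x : ℤ → A) : Prop :=
  ∃ (N : ℤ) (p : ℕ), 1 ≤ p ∧ ∀ n : ℤ, n ≤ N → x n = x (n - (p : ℤ))

def EventuallyPeriodicZ {A : Type*} (x : ℤ → A) : Prop :=
  PositivelyPeriodicZ x ∨ NegativelyPeriodicZ x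

def AperiodicZ {A : Type*} (x : ℤ → A) : Prop := ¬ EventuallyPeriodicZ x

def PurelyPeriodicZ {A : Type*} (x : ℤ → A) : Prop :=
  ∃ p : ℕ, 1 ≤ p ∧ ∀ n : ℤ, x n = x (n + (p : ℤ))

def LeftSpecialZ {A : Type*} (x : ℤ → A) (u : List A) : Prop :=
  ∃ a b : A, a ≠ b ∧ IsFactorZ x (a :: u) ∧ IsFactorZ x (b :: u)

def RightSpecialZ {A : Type*} (x : ℤ → A) (u : List A) : Prop :=
  ∃ a b : A, a ≠ b ∧ IsFactorZ x (u ++ [a]) ∧ IsFactorZ x (u ++ [b])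

def BispecialZ {A : Type*} (x : ℤ → A) (u : List A) : Prop :=
  LeftSpecialZ x u ∧ RightSpecialZ x u

/-- A bi-infinite word over `{0,1}` is Sturmian if it is aperiodic with complexity `n + 1`. -/
def SturmianZ (x : ℤ → Fin 2) : Prop :=
  AperiodicZ x ∧ ∀ n : ℕ, complexityZ x n = n + 1

/-- `x_{[-n, n+1]} = r_n(x) 01 l_n(x)` for all `n`. -/
def UpperCharacteristic (x : ℤ → Fin 2) : Prop :=
  SturmianZ x ∧ ∀ n : ℕ, ∃ r l : List (Fin 2),
    r.length = n ∧ RightSpecialZ x r ∧ l.length = n ∧ LeftSpecialZ x l ∧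
    subwordZ x (-(n : ℤ)) (2 * n + 2) = r ++ [0, 1] ++ l

/-- `x_{[-n, n+1]} = r_n(x) 10 l_n(x)` for all `n`. -/
def LowerCharacteristic (x : ℤ → Fin 2) : Prop :=
  SturmianZ x ∧ ∀ n : ℕ, ∃ r l : List (Fin 2),
    r.length = n ∧ RightSpecialZ x r ∧ l.length = n ∧ LeftSpecialZ x l ∧
    subwordZ x (-(n : ℤ)) (2 * n + 2) = r ++ [1, 0] ++ l

def CharacteristicSturmian (x : ℤ → Fin 2) : Prop :=
  UpperCharacteristic x ∨ LowerCharacteristic x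

def QuasiSturmianZ {A : Type*} (x : ℤ → A) : Prop :=
  AperiodicZ x ∧ ∃ (n₀ k : ℕ), 1 ≤ k ∧ ∀ n : ℕ, n₀ ≤ n → complexityZ x n = n + k

/-- Starting position in `φ(x)` of the image `φ(x_i)` (image of `x_0` starts at `0`). -/
def blockStart {A B : Type*} (φ : A → List B) (x : ℤ → A) (i : ℤ) : ℤ :=
  if 0 ≤ i then ((List.range i.toNat).map fun j => ((φ (x (j : ℤ))).length : ℤ)).sum
  else -((List.range (-i).toNat).map fun j => ((φ (x (-(j : ℤ) - 1))).length : ℤ)).sum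

/-- `y` is the image of the bi-infinite word `x` under the substitution `φ`
(with images of letters nonempty). -/
def IsSubstImage {A B : Type*} (φ : A → List B) (x : ℤ → A) (y : ℤ → B) : Prop :=
  (∀ a : A, φ a ≠ []) ∧
  ∀ i : ℤ, subwordZ y (blockStart φ x i) (φ (x i)).length = φ (x i)

/-- `φ_x(Γ)`: positions of `φ(x)` occupied by images of letters at positions in `Γ`. -/
def substSupp {A B : Type*} (φ : A → List B) (x : ℤ → A) (Γ : Set ℤ) : Set ℤ :=
  {n : ℤ | ∃ i ∈ Γ, blockStart φ x i ≤ n ∧ n < blockStart φ x i + ((φ (x i)).length : ℤ)}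

/-- `φ_x^{-1}(Γ)`: positions of letters of `x` whose image blocks in `φ(x)` meet `Γ`. -/
def substPreimage {A B : Type*} (φ : A → List B) (x : ℤ → A) (Γ : Set ℤ) : Set ℤ :=
  {i : ℤ | ∃ n ∈ Γ, blockStart φ x i ≤ n ∧ n < blockStart φ x i + ((φ (x i)).length : ℤ)}

/-- The set of occurrences of `w` in the finite word `u`. -/
def occSetF {B : Type*} (u w : List B) : Set ℕ :=
  {i : ℕ | i + w.length ≤ u.length ∧ (u.drop i).take w.length = w}

/-- `φ` is a return morphism for `w`. -/
def IsReturnMorphism {A B : Type*} (φ : A → List B) (w : List B) : Prop :=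
  w ≠ [] ∧ Function.Injective φ ∧ (∀ a : A, φ a ≠ []) ∧
  ∀ a : A, occSetF (w ++ φ a) w = {0, (φ a).length}

def listPow {A : Type*} (u : List A) : ℕ → List A
  | 0 => []
  | n + 1 => u ++ listPow u n

/-- A substitution on `{0,1}` is acyclic if `φ(0)` and `φ(1)` are not powers of one word. -/
def AcyclicSubst {A : Type*} (φ : Fin 2 → List A) : Prop :=
  ¬ ∃ (u : List A) (m n : ℕ), φ 0 = listPow u m ∧ φ 1 = listPow u n

/-- The substitution `L₀ : 0 ↦ 0, 1 ↦ 01`. -/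
def Lzero : Fin 2 → List (Fin 2) := fun a => if a = 0 then [0] else [0, 1]

/-- The substitution `L₁ : 0 ↦ 10, 1 ↦ 1`. -/
def Lone : Fin 2 → List (Fin 2) := fun a => if a = 0 then [1, 0] else [1]

/-- A finite word has period `r`. -/
def PeriodicF {A : Type*} (w : List A) (r : ℕ) : Prop :=
  ∀ i : ℕ, i + r < w.length → w[i]? = w[i + r]?

/-- `Γ` is a string attractor of the finite word `w`. -/
def IsAttractorF {A : Type*} (w : List A) (Γ : Set ℕ) : Prop :=
  ∀ u : List A, u ≠ [] → u <:+: w →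
    ∃ i : ℕ, i + u.length ≤ w.length ∧ (w.drop i).take u.length = u ∧
      ∃ p ∈ Γ, i ≤ p ∧ p < i + u.length

def RecurrentZ {A : Type*} (x : ℤ → A) : Prop :=
  ∀ w : List A, IsFactorZ x w → {i : ℤ | occursAt x w i}.Infinite

def UniformlyRecurrentZ {A : Type*} (x : ℤ → A) : Prop :=
  ∀ w : List A, IsFactorZ x w →
    ∃ n : ℕ, ∀ i : ℤ, ∃ j : ℤ, i ≤ j ∧ j + (w.length : ℤ) ≤ i + (n : ℤ) ∧ occursAt x w j

def ModuloRecurrentZ {A : Type*} (x : ℤ → A) : Prop :=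
  ∀ w : List A, IsFactorZ x w → ∀ k : ℕ, 1 ≤ k → ∀ r : ℤ,
    ∃ i : ℤ, occursAt x w i ∧ (k : ℤ) ∣ (i - r)

/-- A shift space: closed (product topology, `A` discrete) and shift-invariant. -/
def IsShiftSpace {A : Type*} (X : Set (ℤ → A)) : Prop :=
  @IsClosed _ (@Pi.topologicalSpace ℤ (fun _ => A) (fun _ => ⊥)) X ∧ shiftZ 1 '' X = X

def IsAttractorX {A : Type*} (X : Set (ℤ → A)) (Γ : Set ℤ) : Prop :=
  ∀ x ∈ X, IsAttractorZ x Γ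

def MinimalShift {A : Type*} (X : Set (ℤ → A)) : Prop :=
  IsShiftSpace X ∧ ∀ Y ⊆ X, IsShiftSpace Y → Y = ∅ ∨ Y = X

/-- The orbit closure of a bi-infinite word (product topology, `A` discrete). -/
def orbitClosureZ {A : Type*} (x : ℤ → A) : Set (ℤ → A) :=
  @closure _ (@Pi.topologicalSpace ℤ (fun _ => A) (fun _ => ⊥)) {y | ∃ k : ℤ, y = shiftZ k x}



open scoped Classical

section Basic
variable {A : Type*} {x : ℤ → A}

lemma subwordZ_eq_map (x : ℤ → A) (i : ℤ) (n : ℕ) :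
    subwordZ x i n = (List.range n).map (fun j : ℕ => x (i + j)) := by
  rw [subwordZ]
  simp only [List.bind_eq_flatMap, List.pure_def, List.map_flatMap]
  induction (List.range n) with
  | nil => rfl
  | cons a l ih => simpa using ih

@[simp] lemma subwordZ_length (x : ℤ → A) (i : ℤ) (n : ℕ) : (subwordZ x i n).length = n := by
  rw [subwordZ_eq_map]; simp

lemma subwordZ_getElem (x : ℤ → A) (i : ℤ) (n : ℕ) (j : ℕ) (hj : j < n) :
    (subwordZ x i n)[j]'(by simpa using hj) = x (i + j) := by
  simp only [subwordZ_eq_map, List.getElem_map, List.getElem_range]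

lemma subwordZ_zero (x : ℤ → A) (i : ℤ) : subwordZ x i 0 = [] := by rw [subwordZ_eq_map]; rfl

lemma subwordZ_succ (x : ℤ → A) (i : ℤ) (n : ℕ) :
    subwordZ x i (n + 1) = subwordZ x i n ++ [x (i + n)] := by
  rw [subwordZ_eq_map, List.range_succ, subwordZ_eq_map]; simp

lemma subwordZ_append (x : ℤ → A) (i : ℤ) (m n : ℕ) :
    subwordZ x i (m + n) = subwordZ x i m ++ subwordZ x (i + m) n := by
  induction n with
  | zero => simp [subwordZ_zero]
  | succ n ih =>
      rw [show m + (n+1) = (m+n) + 1 by ring, subwordZ_succ, ih, subwordZ_succ,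
        List.append_assoc]
      congr 3
      push_cast
      ring

lemma occursAt_iff {w : List A} {i : ℤ} :
    occursAt x w i ↔ ∀ j : ℕ, (hj : j < w.length) → w[j] = x (i + j) := by
  constructor
  · intro h j hj
    have h1 : (subwordZ x i w.length)[j]? = w[j]? := by rw [h]
    rw [List.getElem?_eq_getElem (by simpa using hj), List.getElem?_eq_getElem hj,
      subwordZ_getElem _ _ _ _ hj] at h1
    exact (Option.some_injective _ h1).symm
  · intro h
    apply List.ext_getElem (by simp)
    intro j h1 h2
    rw [subwordZ_getElem _ _ _ _ (by simpa using h1)]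
    exact (h j h2).symm

lemma occursAt_subwordZ (x : ℤ → A) (i : ℤ) (n : ℕ) : occursAt x (subwordZ x i n) i := by
  rw [occursAt_iff]
  intro j hj
  rw [subwordZ_getElem _ _ _ _ (by simpa using hj)]

lemma isFactorZ_subwordZ (x : ℤ → A) (i : ℤ) (n : ℕ) : IsFactorZ x (subwordZ x i n) :=
  ⟨i, occursAt_subwordZ x i n⟩

lemma occursAt_append {u v : List A} {i : ℤ} (hu : occursAt x u i)
    (hv : occursAt x v (i + u.length)) : occursAt x (u ++ v) i := by
  unfold occursAt at *
  rw [List.length_append, subwordZ_append, hu, hv]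

lemma occursAt_append_split {u v : List A} {i : ℤ} (h : occursAt x (u ++ v) i) :
    occursAt x u i ∧ occursAt x v (i + u.length) := by
  unfold occursAt at *
  rw [List.length_append, subwordZ_append] at h
  have := List.append_inj h (by simp)
  exact ⟨this.1, this.2⟩

lemma isFactorZ_of_append_left {u v : List A} (h : IsFactorZ x (u ++ v)) : IsFactorZ x u := by
  obtain ⟨i, hi⟩ := h
  exact ⟨i, (occursAt_append_split hi).1⟩

lemma isFactorZ_of_append_right {u v : List A} (h : IsFactorZ x (u ++ v)) : IsFactorZ x v := by
  obtain ⟨i, hi⟩ := h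
  exact ⟨i + u.length, (occursAt_append_split hi).2⟩

lemma isFactorZ_of_cons {a : A} {u : List A} (h : IsFactorZ x (a :: u)) : IsFactorZ x u :=
  isFactorZ_of_append_right (u := [a]) (by simpa using h)

lemma isFactorZ_nil : IsFactorZ x ([] : List A) := ⟨0, rfl⟩

lemma occursAt_extend_right {w : List A} {i : ℤ} (h : occursAt x w i) :
    occursAt x (w ++ [x (i + w.length)]) i := by
  apply occursAt_append h
  rw [occursAt_iff]
  intro j hj
  simp only [List.length_singleton] at hj
  have : j = 0 := by omega
  subst this
  simp

lemma subwordZ_shiftZ (k : ℤ) (y : ℤ → A) (i : ℤ) (n : ℕ) :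
    subwordZ (shiftZ k y) i n = subwordZ y (i + k) n := by
  apply List.ext_getElem (by simp)
  intro j h1 h2
  rw [subwordZ_getElem _ _ _ _ (by simpa using h1), subwordZ_getElem _ _ _ _ (by simpa using h1)]
  unfold shiftZ
  congr 1
  ring

lemma occursAt_shiftZ {k : ℤ} {y : ℤ → A} {w : List A} {i : ℤ} :
    occursAt (shiftZ k y) w i ↔ occursAt y w (i + k) := by
  unfold occursAt
  rw [subwordZ_shiftZ]

lemma isFactorZ_shiftZ (k : ℤ) (y : ℤ → A) (w : List A) :
    IsFactorZ (shiftZ k y) w ↔ IsFactorZ y w := by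
  constructor
  · rintro ⟨i, hi⟩; exact ⟨i + k, occursAt_shiftZ.1 hi⟩
  · rintro ⟨i, hi⟩; exact ⟨i - k, occursAt_shiftZ.2 (by simpa using hi)⟩

end Basic


open scoped Classical

noncomputable section Counting

/-- all binary words of length n -/
def wordsF (n : ℕ) : Finset (List (Fin 2)) :=
  (Finset.univ : Finset (Fin n → Fin 2)).image List.ofFn

lemma mem_wordsF {n : ℕ} {w : List (Fin 2)} : w ∈ wordsF n ↔ w.length = n := by
  constructor
  · rintro hw
    obtain ⟨f, -, rfl⟩ := Finset.mem_image.1 hw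
    simp
  · intro hw
    subst hw
    refine Finset.mem_image.2 ⟨fun i => w[(i : ℕ)], Finset.mem_univ _, ?_⟩
    exact List.ofFn_getElem

def factorsF (z : ℤ → Fin 2) (n : ℕ) : Finset (List (Fin 2)) :=
  (wordsF n).filter (fun w => IsFactorZ z w)

lemma mem_factorsF {z : ℤ → Fin 2} {n : ℕ} {w : List (Fin 2)} :
    w ∈ factorsF z n ↔ w.length = n ∧ IsFactorZ z w := by
  rw [factorsF, Finset.mem_filter, mem_wordsF]

lemma complexityZ_eq_card (z : ℤ → Fin 2) (n : ℕ) :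
    complexityZ z n = (factorsF z n).card := by
  have h1 : complexityZ z n = Set.ncard {w : List (Fin 2) | w.length = n ∧ IsFactorZ z w} := rfl
  have h2 : {w : List (Fin 2) | w.length = n ∧ IsFactorZ z w} = ↑(factorsF z n) := by
    ext w
    simp [mem_factorsF]
  rw [h1, h2, Set.ncard_coe_finset]

def rsF (z : ℤ → Fin 2) (n : ℕ) : Finset (List (Fin 2)) :=
  (factorsF z n).filter (fun w => RightSpecialZ z w)

lemma mem_rsF {z : ℤ → Fin 2} {n : ℕ} {w : List (Fin 2)} :
    w ∈ rsF z n ↔ w.length = n ∧ IsFactorZ z w ∧ RightSpecialZ z w := by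
  rw [rsF, Finset.mem_filter, mem_factorsF, and_assoc]

lemma extension_card (z : ℤ → Fin 2) {n : ℕ} {u : List (Fin 2)} (hu : u ∈ factorsF z n) :
    (Finset.univ.filter fun a : Fin 2 => IsFactorZ z (u ++ [a])).card
      = if RightSpecialZ z u then 2 else 1 := by
  obtain ⟨hlen, i, hocc⟩ := mem_factorsF.1 hu
  have hmem : z (i + u.length) ∈ Finset.univ.filter fun a : Fin 2 => IsFactorZ z (u ++ [a]) :=
    Finset.mem_filter.2 ⟨Finset.mem_univ _, ⟨i, occursAt_extend_right hocc⟩⟩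
  by_cases hrs : RightSpecialZ z u
  · rw [if_pos hrs]
    obtain ⟨a, b, hab, ha, hb⟩ := hrs
    have : ({a, b} : Finset (Fin 2)) ⊆ Finset.univ.filter fun c : Fin 2 => IsFactorZ z (u ++ [c]) := by
      intro c hc
      rcases Finset.mem_insert.1 hc with rfl | hc
      · exact Finset.mem_filter.2 ⟨Finset.mem_univ _, ha⟩
      · rw [Finset.mem_singleton.1 hc]
        exact Finset.mem_filter.2 ⟨Finset.mem_univ _, hb⟩
    have h2 : ({a, b} : Finset (Fin 2)).card = 2 := Finset.card_pair hab
    have hle := Finset.card_le_card this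
    have hge : (Finset.univ.filter fun c : Fin 2 => IsFactorZ z (u ++ [c])).card ≤ 2 := by
      have := Finset.card_filter_le (Finset.univ : Finset (Fin 2)) fun c => IsFactorZ z (u ++ [c])
      simpa using this
    omega
  · rw [if_neg hrs]
    have hle : (Finset.univ.filter fun c : Fin 2 => IsFactorZ z (u ++ [c])).card ≤ 1 := by
      by_contra hgt
      push_neg at hgt
      obtain ⟨a, ha, b, hb, hab⟩ := Finset.one_lt_card.1 hgt
      exact hrs ⟨a, b, hab, (Finset.mem_filter.1 ha).2, (Finset.mem_filter.1 hb).2⟩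
    have hge : 1 ≤ (Finset.univ.filter fun c : Fin 2 => IsFactorZ z (u ++ [c])).card :=
      Finset.card_pos.2 ⟨_, hmem⟩
    omega

lemma complexity_succ_card (z : ℤ → Fin 2) (n : ℕ) :
    (factorsF z (n+1)).card = (factorsF z n).card + (rsF z n).card := by
  have hmap : ∀ w ∈ factorsF z (n+1), w.dropLast ∈ factorsF z n := by
    intro w hw
    obtain ⟨hlen, hfac⟩ := mem_factorsF.1 hw
    have hne : w ≠ [] := by intro h; rw [h] at hlen; simp at hlen
    refine mem_factorsF.2 ⟨by rw [List.length_dropLast, hlen]; omega, ?_⟩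
    apply isFactorZ_of_append_left (v := [w.getLast hne])
    rwa [List.dropLast_append_getLast]
  rw [Finset.card_eq_sum_card_fiberwise hmap]
  have hfib : ∀ u ∈ factorsF z n,
      ((factorsF z (n+1)).filter fun w => w.dropLast = u).card
        = (Finset.univ.filter fun a : Fin 2 => IsFactorZ z (u ++ [a])).card := by
    intro u hu
    have hulen : u.length = n := (mem_factorsF.1 hu).1
    symm
    apply Finset.card_bij (fun a _ => u ++ [a])
    · intro a ha
      refine Finset.mem_filter.2 ⟨mem_factorsF.2 ⟨by simp [hulen], (Finset.mem_filter.1 ha).2⟩, ?_⟩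
      simp
    · intro a _ b _ hab
      simpa using hab
    · intro w hw
      obtain ⟨hw1, hw2⟩ := Finset.mem_filter.1 hw
      obtain ⟨hlen, hfac⟩ := mem_factorsF.1 hw1
      have hne : w ≠ [] := by intro h; rw [h] at hlen; simp at hlen
      refine ⟨w.getLast hne, ?_, ?_⟩
      · refine Finset.mem_filter.2 ⟨Finset.mem_univ _, ?_⟩
        rw [← hw2]
        rwa [List.dropLast_append_getLast]
      · rw [← hw2, List.dropLast_append_getLast]
  rw [Finset.sum_congr rfl hfib]
  have : ∀ u ∈ factorsF z n,
      (Finset.univ.filter fun a : Fin 2 => IsFactorZ z (u ++ [a])).card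
        = 1 + if RightSpecialZ z u then 1 else 0 := by
    intro u hu
    rw [extension_card z hu]
    by_cases h : RightSpecialZ z u <;> simp [h]
  rw [Finset.sum_congr rfl this, Finset.sum_add_distrib]
  congr 1
  · simp
  · rw [Finset.sum_ite, Finset.sum_const, Finset.sum_const]
    simp [rsF]

lemma complexityZ_zero (z : ℤ → Fin 2) : complexityZ z 0 = 1 := by
  rw [complexityZ_eq_card]
  have : factorsF z 0 = {[]} := by
    ext w
    rw [mem_factorsF]
    constructor
    · rintro ⟨h, -⟩
      simpa using List.length_eq_zero_iff.1 h
    · rintro h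
      rw [Finset.mem_singleton] at h
      subst h
      exact ⟨rfl, isFactorZ_nil⟩
  rw [this]
  rfl

/-- from Sturmian complexity: exactly one right special factor of each length -/
lemma rs_card_one_of_sturmian {z : ℤ → Fin 2} (h : ∀ n, complexityZ z n = n + 1) (n : ℕ) :
    (rsF z n).card = 1 := by
  have h1 := complexity_succ_card z n
  rw [← complexityZ_eq_card, ← complexityZ_eq_card, h n, h (n+1)] at h1
  omega

lemma rs_unique_of_sturmian {z : ℤ → Fin 2} (h : ∀ n, complexityZ z n = n + 1)
    {u v : List (Fin 2)} (hu : IsFactorZ z u ∧ RightSpecialZ z u)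
    (hv : IsFactorZ z v ∧ RightSpecialZ z v) (hlen : u.length = v.length) : u = v := by
  have hc := rs_card_one_of_sturmian h u.length
  obtain ⟨w, hw⟩ := Finset.card_eq_one.1 hc
  have h1 : u ∈ rsF z u.length := mem_rsF.2 ⟨rfl, hu.1, hu.2⟩
  have h2 : v ∈ rsF z u.length := mem_rsF.2 ⟨hlen.symm, hv.1, hv.2⟩
  rw [hw, Finset.mem_singleton] at h1 h2
  rw [h1, h2]

/-- converse: unique right special of each length gives Sturmian complexity -/
lemma complexity_of_rs_card_one {z : ℤ → Fin 2} (h : ∀ n, (rsF z n).card = 1) (n : ℕ) :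
    complexityZ z n = n + 1 := by
  induction n with
  | zero => exact complexityZ_zero z
  | succ n ih =>
      rw [complexityZ_eq_card, complexity_succ_card, ← complexityZ_eq_card, ih, h n]

end Counting


open scoped Classical

section Phi

/-- the substitutions L0 and L1 in uniform form -/
def phiC (c : Fin 2) : Fin 2 → List (Fin 2) := fun a => c :: (if a = c then [] else [a])

lemma Lzero_eq_phiC : Lzero = phiC 0 := by
  funext a
  fin_cases a <;> rfl

lemma Lone_eq_phiC : Lone = phiC 1 := by
  funext a
  fin_cases a <;> rfl

lemma phiC_ne_nil (c a : Fin 2) : phiC c a ≠ [] := by simp [phiC]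

lemma phiC_self (c : Fin 2) : phiC c c = [c] := by simp [phiC]

lemma phiC_other {c a : Fin 2} (h : a ≠ c) : phiC c a = [c, a] := by simp [phiC, h]

lemma phiC_length_pos (c a : Fin 2) : 1 ≤ (phiC c a).length := by
  by_cases h : a = c
  · subst h; rw [phiC_self]; simp
  · rw [phiC_other h]; simp

lemma phiC_length_le (c a : Fin 2) : (phiC c a).length ≤ 2 := by
  by_cases h : a = c
  · subst h; rw [phiC_self]; simp
  · rw [phiC_other h]; simp

lemma phiC_length_eq_one {c a : Fin 2} (h : (phiC c a).length = 1) : a = c := by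
  by_cases hac : a = c
  · exact hac
  · rw [phiC_other hac] at h; simp at h

lemma fin2_eq_of_ne {a b c : Fin 2} (h1 : a ≠ c) (h2 : b ≠ c) : a = b := by
  fin_cases a <;> fin_cases b <;> fin_cases c <;> simp_all

lemma fin2_add_one_ne (c : Fin 2) : c + 1 ≠ c := by fin_cases c <;> decide

lemma fin2_eq_add_one_of_ne {a c : Fin 2} (h : a ≠ c) : a = c + 1 :=
  fin2_eq_of_ne h (fin2_add_one_ne c)

/-- image of a finite word -/
def PhiW (c : Fin 2) (v : List (Fin 2)) : List (Fin 2) := v.flatMap (phiC c)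

@[simp] lemma PhiW_nil (c : Fin 2) : PhiW c [] = [] := rfl

lemma PhiW_cons (c a : Fin 2) (v : List (Fin 2)) : PhiW c (a :: v) = phiC c a ++ PhiW c v := rfl

lemma PhiW_append (c : Fin 2) (u v : List (Fin 2)) : PhiW c (u ++ v) = PhiW c u ++ PhiW c v := by
  simp [PhiW]

lemma PhiW_singleton (c a : Fin 2) : PhiW c [a] = phiC c a := by
  rw [PhiW_cons]; simp

lemma PhiW_length_ge (c : Fin 2) (v : List (Fin 2)) : v.length ≤ (PhiW c v).length := by
  induction v with
  | nil => simp
  | cons a v ih =>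
      rw [PhiW_cons, List.length_append, List.length_cons]
      have := phiC_length_pos c a
      omega

lemma PhiW_eq_nil {c : Fin 2} {v : List (Fin 2)} (h : PhiW c v = []) : v = [] := by
  cases v with
  | nil => rfl
  | cons a v => rw [PhiW_cons] at h; exact absurd (List.append_eq_nil_iff.1 h).1 (phiC_ne_nil c a)

lemma PhiW_cons_eq (c a : Fin 2) (v : List (Fin 2)) :
    PhiW c (a :: v) = c :: ((if a = c then [] else [a]) ++ PhiW c v) := rfl

lemma PhiW_injective (c : Fin 2) : ∀ u v : List (Fin 2), PhiW c u = PhiW c v → u = v := by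
  intro u
  induction u with
  | nil => intro v h; exact (PhiW_eq_nil (h.symm)).symm
  | cons a u ih =>
      intro v h
      cases v with
      | nil => exact absurd (PhiW_eq_nil h) (by simp)
      | cons b v =>
          rw [PhiW_cons_eq, PhiW_cons_eq] at h
          simp only [List.cons.injEq, true_and] at h
          by_cases hac : a = c <;> by_cases hbc : b = c
          · rw [if_pos hac, if_pos hbc] at h
            simp only [List.nil_append] at h
            rw [hac, hbc, ih v h]
          · rw [if_pos hac, if_neg hbc] at h
            simp only [List.nil_append, List.singleton_append] at h
            exfalso
            cases u with
            | nil => simp at h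
            | cons a' u' =>
                rw [PhiW_cons_eq] at h
                simp only [List.cons.injEq] at h
                exact hbc h.1.symm
          · rw [if_neg hac, if_pos hbc] at h
            simp only [List.nil_append, List.singleton_append] at h
            exfalso
            cases v with
            | nil => simp at h
            | cons b' v' =>
                rw [PhiW_cons_eq] at h
                simp only [List.cons.injEq] at h
                exact hac h.1
          · rw [if_neg hac, if_neg hbc] at h
            simp only [List.singleton_append, List.cons.injEq] at h
            rw [h.1, ih v h.2]

end Phi

section Blocks

lemma intRange_map_norm {α : Type*} (f : ℤ → α) (n : ℕ) :
    (List.map f (List.flatMap (fun a : ℕ => [(a : ℤ)]) (List.range n)))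
      = (List.range n).map (fun j : ℕ => f j) := by
  simp only [List.map_flatMap]
  induction (List.range n) with
  | nil => rfl
  | cons a l ih => simpa using ih

lemma blockStart_eq_pos {A B : Type*} (φ : A → List B) (x : ℤ → A) (i : ℤ) (h : 0 ≤ i) :
    blockStart φ x i
      = (((List.range i.toNat).map fun j : ℕ => ((φ (x (j : ℤ))).length : ℤ))).sum := by
  rw [blockStart, if_pos h]
  congr 1
  simp only [List.bind_eq_flatMap, List.pure_def]
  exact intRange_map_norm _ _

lemma blockStart_eq_neg {A B : Type*} (φ : A → List B) (x : ℤ → A) (i : ℤ) (h : ¬ 0 ≤ i) :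
    blockStart φ x i
      = -(((List.range (-i).toNat).map fun j : ℕ => ((φ (x (-(j : ℤ) - 1))).length : ℤ))).sum := by
  rw [blockStart, if_neg h]
  congr 2
  simp only [List.bind_eq_flatMap, List.pure_def]
  exact intRange_map_norm _ _

lemma blockStart_zero {A B : Type*} (φ : A → List B) (x : ℤ → A) : blockStart φ x 0 = 0 := rfl

lemma blockStart_succ {A B : Type*} (φ : A → List B) (x : ℤ → A) (i : ℤ) :
    blockStart φ x (i + 1) = blockStart φ x i + ((φ (x i)).length : ℤ) := by
  by_cases h0 : 0 ≤ i
  · rw [blockStart_eq_pos φ x (i+1) (by omega), blockStart_eq_pos φ x i h0]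
    have ht : (i + 1).toNat = i.toNat + 1 := by omega
    rw [ht, List.range_succ, List.map_append, List.sum_append]
    simp [Int.toNat_of_nonneg h0]
  · by_cases h1 : i + 1 = 0
    · have hi : i = -1 := by omega
      subst hi
      have e : (-1 : ℤ) + 1 = 0 := by norm_num
      rw [e, blockStart_eq_pos φ x 0 le_rfl, blockStart_eq_neg φ x (-1) (by norm_num)]
      norm_num [List.range_succ]
    · rw [blockStart_eq_neg φ x (i+1) (by omega), blockStart_eq_neg φ x i h0]
      have ht : (-i).toNat = (-(i + 1)).toNat + 1 := by omega
      rw [ht, List.range_succ, List.map_append, List.sum_append]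
      have hc : (((-(i + 1)).toNat : ℤ)) = -(i + 1) := Int.toNat_of_nonneg (by omega)
      have h2 : -((((-(i+1)).toNat : ℕ) : ℤ)) - 1 = i := by omega
      simp only [List.map_cons, List.map_nil, List.sum_cons, List.sum_nil]
      rw [h2]
      ring

lemma blockStart_pred {A B : Type*} (φ : A → List B) (x : ℤ → A) (i : ℤ) :
    blockStart φ x (i - 1) = blockStart φ x i - ((φ (x (i - 1))).length : ℤ) := by
  have := blockStart_succ φ x (i - 1)
  simp only [sub_add_cancel] at this
  omega

end Blocks


open scoped Classical

section BlocksY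

lemma occursAt_singleton {z : ℤ → Fin 2} {a : Fin 2} {m : ℤ} :
    occursAt z [a] m ↔ z m = a := by
  constructor
  · intro h
    have := occursAt_iff.1 h 0 (by simp)
    simpa using this.symm
  · intro h
    rw [occursAt_iff]
    intro j hj
    simp only [List.length_singleton] at hj
    have : j = 0 := by omega
    subst this
    simpa using h.symm


variable {c : Fin 2} {x y : ℤ → Fin 2} (hxy : IsSubstImage (phiC c) x y)

local notation "b" => blockStart (phiC c) x

lemma bS (i : ℤ) : b (i + 1) = b i + ((phiC c (x i)).length : ℤ) :=
  blockStart_succ (phiC c) x i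

lemma bS_lb (i : ℤ) : b i + 1 ≤ b (i + 1) := by
  have := bS (c := c) (x := x) i
  have := phiC_length_pos c (x i)
  omega

lemma bS_ub (i : ℤ) : b (i + 1) ≤ b i + 2 := by
  have := bS (c := c) (x := x) i
  have := phiC_length_le c (x i)
  omega

lemma b_strictMono : StrictMono (b) := by
  apply strictMono_int_of_lt_succ
  intro i
  have := bS_lb (c := c) (x := x) i
  omega

lemma b_diff_ge {i j : ℤ} (h : i ≤ j) : j - i ≤ b j - b i := by
  obtain ⟨n, rfl⟩ : ∃ n : ℕ, j = i + n := ⟨(j - i).toNat, by omega⟩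
  clear h
  induction n with
  | zero => simp
  | succ n ih =>
      have h1 := bS_lb (c := c) (x := x) (i + n)
      have : i + ((n : ℕ) + 1 : ℕ) = (i + n) + 1 := by push_cast; ring
      rw [this]
      push_cast at ih ⊢
      omega

/-- every integer position lies in some block -/
lemma b_cover (m : ℤ) : ∃ i : ℤ, b i ≤ m ∧ m < b (i + 1) := by
  induction m using Int.induction_on with
  | zero =>
      refine ⟨0, le_of_eq (blockStart_zero _ _), ?_⟩
      have := bS_lb (c := c) (x := x) 0
      rw [blockStart_zero] at this
      omega
  | succ m ih =>
      obtain ⟨i, h1, h2⟩ := ih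
      by_cases h : (m : ℤ) + 1 < b (i + 1)
      · exact ⟨i, by omega, h⟩
      · refine ⟨i + 1, by omega, ?_⟩
        have := bS_lb (c := c) (x := x) (i + 1)
        omega
  | pred m ih =>
      obtain ⟨i, h1, h2⟩ := ih
      by_cases h : b i ≤ -(m : ℤ) - 1
      · exact ⟨i, h, by omega⟩
      · refine ⟨i - 1, ?_, ?_⟩
        · have := bS_lb (c := c) (x := x) (i - 1)
          simp only [sub_add_cancel] at this
          omega
        · simp only [sub_add_cancel]
          omega

include hxy

lemma occursAt_block (i : ℤ) : occursAt y (phiC c (x i)) (b i) := hxy.2 i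

lemma y_bS (i : ℤ) : y (b i) = c := by
  have h := occursAt_iff.1 (occursAt_block hxy i) 0 (by have := phiC_length_pos c (x i); omega)
  simp only [Nat.cast_zero, add_zero] at h
  rw [← h]
  rfl

lemma x_eq_y_bS_add_one (i : ℤ) : x i = y (b i + 1) := by
  by_cases h : x i = c
  · have hb : b (i + 1) = b i + 1 := by
      rw [bS, h, phiC_self]; rfl
    rw [h, ← hb, y_bS hxy]
  · have hocc2 : occursAt y [c, x i] (b i) := by
      rw [← phiC_other h]; exact occursAt_block hxy i
    have h1 := occursAt_iff.1 hocc2 1 (by simp)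
    simpa using h1

lemma x_pred_eq_y_bS_sub_one (i : ℤ) : x (i - 1) = y (b i - 1) := by
  have hb : b i = b (i - 1) + ((phiC c (x (i-1))).length : ℤ) := by
    have := bS (c := c) (x := x) (i - 1)
    simp only [sub_add_cancel] at this
    omega
  by_cases h : x (i - 1) = c
  · rw [h, phiC_self] at hb
    simp only [List.length_singleton] at hb
    have : b i - 1 = b (i - 1) := by omega
    rw [this, y_bS hxy, h]
  · rw [phiC_other h] at hb
    norm_num at hb
    have hocc2 : occursAt y [c, x (i - 1)] (b (i - 1)) := by
      rw [← phiC_other h]; exact occursAt_block hxy (i - 1)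
    have h1 := occursAt_iff.1 hocc2 1 (by simp)
    simp only [List.getElem_cons_succ, List.getElem_cons_zero] at h1
    rw [h1]
    congr 1
    push_cast
    omega

/-- positions with letter c are exactly the block starts -/
lemma blockStart_char {m : ℤ} (h : y m = c) : ∃ i : ℤ, m = b i := by
  obtain ⟨i, h1, h2⟩ := b_cover (c := c) (x := x) m
  rcases eq_or_lt_of_le h1 with he | hlt
  · exact ⟨i, he.symm⟩
  · exfalso
    have hub := bS_ub (c := c) (x := x) i
    have hm : m = b i + 1 := by omega
    have hxi : x i ≠ c := by
      intro hc
      have : b (i+1) = b i + 1 := by rw [bS, hc, phiC_self]; rfl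
      omega
    have := x_eq_y_bS_add_one hxy i
    rw [← hm] at this
    exact hxi (this.trans h)

/-- image of an occurrence -/
lemma occursAt_PhiW : ∀ (v : List (Fin 2)) (i : ℤ), occursAt x v i →
    occursAt y (PhiW c v) (b i) ∧ b i + ((PhiW c v).length : ℤ) = b (i + v.length) := by
  intro v
  induction v with
  | nil =>
      intro i _
      refine ⟨rfl, by simp⟩
  | cons a v ih =>
      intro i hocc
      have hsplit := occursAt_append_split (u := [a]) (v := v) (by simpa using hocc)
      have ha : x i = a := by
        have := occursAt_iff.1 hsplit.1 0 (by simp)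
        simpa using this.symm
      have hv := hsplit.2
      simp only [List.length_singleton] at hv
      obtain ⟨ih1, ih2⟩ := ih (i + 1) hv
      constructor
      · rw [PhiW_cons]
        apply occursAt_append
        · rw [← ha]; exact occursAt_block hxy i
        · have : b i + ((phiC c a).length : ℤ) = b (i + 1) := by
            rw [bS, ha]
          rw [this]
          exact ih1
      · rw [PhiW_cons, List.length_append]
        have hb1 : b (i + 1) = b i + ((phiC c a).length : ℤ) := by rw [bS, ha]
        have : i + ((a :: v).length : ℤ) = (i + 1) + v.length := by simp; ring
        rw [this, ← ih2, hb1]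
        push_cast
        ring

lemma occursAt_PhiW_c {v : List (Fin 2)} {i : ℤ} (hocc : occursAt x v i) :
    occursAt y (PhiW c v ++ [c]) (b i) := by
  obtain ⟨h1, h2⟩ := occursAt_PhiW hxy v i hocc
  apply occursAt_append h1
  rw [h2]
  exact occursAt_singleton.2 (y_bS hxy _)

/-- decoding a factor of `y` followed by `c`, starting at a block start -/
lemma decode1 : ∀ (n : ℕ) (w : List (Fin 2)) (_ : w.length = n) (i : ℤ),
    occursAt y (w ++ [c]) (b i) → ∃ v, w = PhiW c v ∧ occursAt x v i := by
  intro n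
  induction n using Nat.strong_induction_on with
  | _ n ih =>
    intro w hlen i hocc
    cases w with
    | nil => exact ⟨[], rfl, rfl⟩
    | cons e w' =>
        have hsplit := occursAt_append_split (u := [e]) (v := w' ++ [c]) (by simpa using hocc)
        have he : e = c := by
          have := occursAt_iff.1 hsplit.1 0 (by simp)
          simp only [List.getElem_cons_zero, add_zero, Nat.cast_zero] at this
          rw [this, y_bS hxy]
        by_cases hxc : x i = c
        · have hb1 : b (i + 1) = b i + 1 := by rw [bS, hxc, phiC_self]; rfl
          have hocc' : occursAt y (w' ++ [c]) (b (i + 1)) := by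
            rw [hb1]
            simpa using hsplit.2
          obtain ⟨v', hv1, hv2⟩ := ih w'.length (by simp [← hlen]) w' rfl (i + 1) hocc'
          refine ⟨c :: v', ?_, ?_⟩
          · rw [PhiW_cons, phiC_self, he, hv1]
            rfl
          · apply occursAt_append (u := [c]) (occursAt_singleton.2 hxc)
            simpa using hv2
        · have hb1 : b (i + 1) = b i + 2 := by
            rw [bS, phiC_other hxc]; rfl
          cases w' with
          | nil =>
              exfalso
              have h1 := occursAt_iff.1 hocc 1 (by simp)
              have : ((e :: [] ++ [c]) : List (Fin 2))[1] = c := rfl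
              rw [this] at h1
              push_cast at h1
              have := x_eq_y_bS_add_one hxy i
              rw [← h1] at this
              exact hxc this
          | cons f w'' =>
              have hf : f = x i := by
                have h1 := occursAt_iff.1 hocc 1 (by simp)
                have : ((e :: (f :: w'') ++ [c]) : List (Fin 2))[1] = f := rfl
                rw [this] at h1
                push_cast at h1
                rw [h1, x_eq_y_bS_add_one hxy i]
              have hocc' : occursAt y (w'' ++ [c]) (b (i + 1)) := by
                rw [hb1]
                have := occursAt_append_split (u := [e, f]) (v := w'' ++ [c]) (by simpa using hocc)
                simpa using this.2
              obtain ⟨v', hv1, hv2⟩ := ih w''.length (by simp [← hlen]) w'' rfl (i + 1) hocc'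
              refine ⟨x i :: v', ?_, ?_⟩
              · rw [PhiW_cons, phiC_other hxc, he, hf, hv1]
                rfl
              · apply occursAt_append (u := [x i]) (occursAt_singleton.2 rfl)
                simpa using hv2

/-- decoding a factor of `y` followed by the other letter -/
lemma decode2 : ∀ (n : ℕ) (w : List (Fin 2)) (_ : w.length = n) (i : ℤ) (d : Fin 2) (_ : d ≠ c),
    occursAt y (w ++ [d]) (b i) → ∃ v, w = PhiW c v ++ [c] ∧ occursAt x (v ++ [d]) i := by
  intro n
  induction n using Nat.strong_induction_on with
  | _ n ih =>
    intro w hlen i d hd hocc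
    cases w with
    | nil =>
        exfalso
        have h1 := occursAt_iff.1 hocc 0 (by simp)
        simp only [List.nil_append, List.getElem_cons_zero, add_zero, Nat.cast_zero] at h1
        rw [y_bS hxy] at h1
        exact hd h1
    | cons e w' =>
        have hsplit := occursAt_append_split (u := [e]) (v := w' ++ [d]) (by simpa using hocc)
        have he : e = c := by
          have := occursAt_iff.1 hsplit.1 0 (by simp)
          simp only [List.getElem_cons_zero, add_zero, Nat.cast_zero] at this
          rw [this, y_bS hxy]
        by_cases hxc : x i = c
        · cases w' with
          | nil =>
              exfalso
              have hb1 : b (i + 1) = b i + 1 := by rw [bS, hxc, phiC_self]; rfl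
              have h1 := occursAt_iff.1 hocc 1 (by simp)
              have : ((e :: [] ++ [d]) : List (Fin 2))[1] = d := rfl
              rw [this] at h1
              push_cast at h1
              rw [show (b i) + 1 = b (i+1) by omega, y_bS hxy] at h1
              exact hd h1
          | cons f w'' =>
              have hb1 : b (i + 1) = b i + 1 := by rw [bS, hxc, phiC_self]; rfl
              have hocc' : occursAt y ((f :: w'') ++ [d]) (b (i + 1)) := by
                rw [hb1]
                simpa using hsplit.2
              obtain ⟨v', hv1, hv2⟩ :=
                ih (f :: w'').length (by simp [← hlen]) (f :: w'') rfl (i + 1) d hd hocc'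
              refine ⟨c :: v', ?_, ?_⟩
              · rw [PhiW_cons, phiC_self, he, hv1]
                rfl
              · have : (c :: v') ++ [d] = [c] ++ (v' ++ [d]) := by simp
                rw [this]
                apply occursAt_append (occursAt_singleton.2 hxc)
                simpa using hv2
        · have hb1 : b (i + 1) = b i + 2 := by rw [bS, phiC_other hxc]; rfl
          cases w' with
          | nil =>
              -- w = [c], d must equal x i
              have h1 := occursAt_iff.1 hocc 1 (by simp)
              have : ((e :: [] ++ [d]) : List (Fin 2))[1] = d := rfl
              rw [this] at h1
              have hxd : x i = d := by
                push_cast at h1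
                rw [x_eq_y_bS_add_one hxy i, ← h1]
              refine ⟨[], by rw [he]; rfl, ?_⟩
              simpa using occursAt_singleton.2 hxd
          | cons f w'' =>
              have hf : f = x i := by
                have h1 := occursAt_iff.1 hocc 1 (by simp)
                have : ((e :: (f :: w'') ++ [d]) : List (Fin 2))[1] = f := rfl
                rw [this] at h1
                push_cast at h1
                rw [h1, x_eq_y_bS_add_one hxy i]
              have hocc' : occursAt y (w'' ++ [d]) (b (i + 1)) := by
                rw [hb1]
                have := occursAt_append_split (u := [e, f]) (v := w'' ++ [d]) (by simpa using hocc)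
                simpa using this.2
              obtain ⟨v', hv1, hv2⟩ :=
                ih w''.length (by simp [← hlen]) w'' rfl (i + 1) d hd hocc'
              refine ⟨x i :: v', ?_, ?_⟩
              · rw [PhiW_cons, phiC_other hxc, he, hf, hv1]
                rfl
              · have : (x i :: v') ++ [d] = [x i] ++ (v' ++ [d]) := by simp
                rw [this]
                apply occursAt_append (occursAt_singleton.2 rfl)
                simpa using hv2

end BlocksY


open scoped Classical

section Specials

variable {z : ℤ → Fin 2}

lemma rs_suffix {t s : List (Fin 2)} (h : RightSpecialZ z (t ++ s)) : RightSpecialZ z s := by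
  obtain ⟨a, b, hab, ha, hb⟩ := h
  exact ⟨a, b, hab, isFactorZ_of_append_right (by rwa [← List.append_assoc]),
    isFactorZ_of_append_right (by rwa [← List.append_assoc])⟩

lemma ls_prefix {s t : List (Fin 2)} (h : LeftSpecialZ z (s ++ t)) : LeftSpecialZ z s := by
  obtain ⟨a, b, hab, ha, hb⟩ := h
  exact ⟨a, b, hab, isFactorZ_of_append_left (u := a :: s) (by simpa using ha),
    isFactorZ_of_append_left (u := b :: s) (by simpa using hb)⟩

lemma fin2_mem_pair {a b e : Fin 2} (hab : a ≠ b) : e = a ∨ e = b := by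
  fin_cases a <;> fin_cases b <;> fin_cases e <;> simp_all

lemma rs_ext {w : List (Fin 2)} (h : RightSpecialZ z w) (e : Fin 2) :
    IsFactorZ z (w ++ [e]) := by
  obtain ⟨a, b, hab, ha, hb⟩ := h
  rcases fin2_mem_pair (e := e) hab with rfl | rfl
  · exact ha
  · exact hb

lemma rs_factor {w : List (Fin 2)} (h : RightSpecialZ z w) : IsFactorZ z w :=
  isFactorZ_of_append_left (rs_ext h 0)

/-- in a word with Sturmian complexity, the shorter of two right special factors
is a suffix of the longer -/
lemma rs_x_suffix_eq (hst : ∀ n, complexityZ z n = n + 1) {u v : List (Fin 2)}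
    (hu : IsFactorZ z u ∧ RightSpecialZ z u) (hv : IsFactorZ z v ∧ RightSpecialZ z v)
    (hlen : u.length ≤ v.length) : ∃ t, v = t ++ u := by
  set k := v.length - u.length with hk
  have hsplit : v = v.take k ++ v.drop k := (List.take_append_drop k v).symm
  refine ⟨v.take k, ?_⟩
  have hdfac : IsFactorZ z (v.drop k) := isFactorZ_of_append_right (hsplit ▸ hv.1)
  have hdrs : RightSpecialZ z (v.drop k) := rs_suffix (hsplit ▸ hv.2)
  have hdl : (v.drop k).length = u.length := by
    rw [List.length_drop]
    omega
  rw [rs_unique_of_sturmian hst hu ⟨hdfac, hdrs⟩ hdl.symm]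
  exact hsplit

end Specials

section RSY

variable {c : Fin 2} {x y : ℤ → Fin 2} (hxy : IsSubstImage (phiC c) x y)

local notation "b" => blockStart (phiC c) x

lemma PhiW_append_c (c : Fin 2) (v : List (Fin 2)) :
    PhiW c (v ++ [c]) = PhiW c v ++ [c] := by
  rw [PhiW_append, PhiW_singleton, phiC_self]

include hxy

/-- image of a right special factor, followed by `c`, is right special -/
lemma rs_lift {v : List (Fin 2)} (hfac : IsFactorZ x v) (hrs : RightSpecialZ x v) :
    IsFactorZ y (PhiW c v ++ [c]) ∧ RightSpecialZ y (PhiW c v ++ [c]) := by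
  obtain ⟨i1, h1⟩ := rs_ext hrs c
  obtain ⟨i2, h2⟩ := rs_ext hrs (c + 1)
  have hf1 : occursAt y (PhiW c (v ++ [c]) ++ [c]) (b i1) := occursAt_PhiW_c hxy h1
  rw [PhiW_append_c] at hf1
  have hf2 : occursAt y (PhiW c (v ++ [c + 1])) (b i2) := (occursAt_PhiW hxy _ i2 h2).1
  have he2 : PhiW c (v ++ [c + 1]) = (PhiW c v ++ [c]) ++ [c + 1] := by
    rw [PhiW_append, PhiW_singleton, phiC_other (fin2_add_one_ne c)]
    simp
  rw [he2] at hf2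
  refine ⟨isFactorZ_of_append_left ⟨_, hf2⟩, ?_⟩
  exact ⟨c, c + 1, (fin2_add_one_ne c).symm, ⟨_, hf1⟩, ⟨_, hf2⟩⟩

/-- a right special factor of `y` beginning with `c` comes from a right special factor of `x` -/
lemma rs_y_form {w0 : List (Fin 2)} (hw : RightSpecialZ y (c :: w0)) :
    ∃ v, c :: w0 = PhiW c v ++ [c] ∧ RightSpecialZ x v ∧ IsFactorZ x v
      ∧ IsFactorZ x (v ++ [c]) := by
  obtain ⟨m1, hm1⟩ := rs_ext hw c
  obtain ⟨m2, hm2⟩ := rs_ext hw (c + 1)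
  have hy1 : y m1 = c := by
    have := occursAt_iff.1 hm1 0 (by simp)
    simpa using this.symm
  have hy2 : y m2 = c := by
    have := occursAt_iff.1 hm2 0 (by simp)
    simpa using this.symm
  obtain ⟨i1, rfl⟩ := blockStart_char hxy hy1
  obtain ⟨i2, rfl⟩ := blockStart_char hxy hy2
  obtain ⟨u, hu1, hu2⟩ := decode1 hxy (c :: w0).length (c :: w0) rfl i1 hm1
  obtain ⟨v, hv1, hv2⟩ := decode2 hxy (c :: w0).length (c :: w0) rfl i2 (c + 1)
    (fin2_add_one_ne c) hm2
  have huv : u = v ++ [c] := by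
    apply PhiW_injective c
    rw [← hu1, hv1, PhiW_append_c]
  refine ⟨v, hv1, ?_, ?_, ?_⟩
  · refine ⟨c, c + 1, (fin2_add_one_ne c).symm, ?_, ⟨i2, hv2⟩⟩
    rw [← huv]
    exact ⟨i1, hu2⟩
  · apply isFactorZ_of_append_left (v := [c])
    rw [← huv]
    exact ⟨i1, hu2⟩
  · rw [← huv]
    exact ⟨i1, hu2⟩

/-- a right special factor of `y` beginning with the other letter extends to the left by `c` -/
lemma rs_y_cons {d : Fin 2} {w0 : List (Fin 2)} (hd : d ≠ c)
    (hw : RightSpecialZ y (d :: w0)) : RightSpecialZ y (c :: d :: w0) := by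
  obtain ⟨a, a', haa, ha, ha'⟩ := hw
  have key : ∀ e : Fin 2, IsFactorZ y ((d :: w0) ++ [e]) → IsFactorZ y ((c :: d :: w0) ++ [e]) := by
    rintro e ⟨m, hm⟩
    have hym : y m = d := by
      have := occursAt_iff.1 hm 0 (by simp)
      simpa using this.symm
    obtain ⟨i, hi1, hi2⟩ := b_cover (c := c) (x := x) m
    have hne : m ≠ b i := by
      intro h
      rw [h, y_bS hxy] at hym
      exact hd hym.symm
    have hub := bS_ub (c := c) (x := x) i
    have hm1 : m = b i + 1 := by omega
    have hprev : y (m - 1) = c := by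
      rw [hm1]
      simpa using y_bS hxy i
    refine ⟨m - 1, ?_⟩
    have : (c :: d :: w0) ++ [e] = [c] ++ ((d :: w0) ++ [e]) := by simp
    rw [this]
    apply occursAt_append (occursAt_singleton.2 hprev)
    simpa using hm
  exact ⟨a, a', haa, key a ha, key a' ha'⟩

/-- two right special factors of `y` beginning with `c` of equal length are equal -/
lemma rs_y_unique_c (hst : ∀ n, complexityZ x n = n + 1) {w0 w0' : List (Fin 2)}
    (hw : RightSpecialZ y (c :: w0)) (hw' : RightSpecialZ y (c :: w0'))
    (hlen : w0.length = w0'.length) : w0 = w0' := by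
  obtain ⟨v, hv1, hv2, hv3, -⟩ := rs_y_form hxy hw
  obtain ⟨v', hv1', hv2', hv3', -⟩ := rs_y_form hxy hw'
  have key : ∀ (a a' : List (Fin 2)), IsFactorZ x a → RightSpecialZ x a →
      IsFactorZ x a' → RightSpecialZ x a' → a.length ≤ a'.length →
      (PhiW c a ++ [c]).length = (PhiW c a' ++ [c]).length →
        PhiW c a ++ [c] = PhiW c a' ++ [c] := by
    intro a a' f1 r1 f2 r2 hl hpl
    obtain ⟨t, rfl⟩ := rs_x_suffix_eq hst ⟨f1, r1⟩ ⟨f2, r2⟩ hl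
    rw [PhiW_append] at hpl ⊢
    have ht : PhiW c t = [] := by
      apply List.length_eq_zero_iff.1
      simp only [List.length_append] at hpl
      omega
    rw [ht]
    simp
  rcases le_total v.length v'.length with hle | hle
  · have := key v v' hv3 hv2 hv3' hv2' hle (by rw [← hv1, ← hv1']; simp [hlen])
    have h2 : c :: w0 = c :: w0' := by rw [hv1, hv1', this]
    simpa using h2
  · have := key v' v hv3' hv2' hv3 hv2 hle (by rw [← hv1, ← hv1']; simp [hlen])
    have h2 : c :: w0' = c :: w0 := by rw [hv1, hv1', this]
    simp at h2
    exact h2.symm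

/-- uniqueness of right special factors of `y` -/
lemma rs_y_unique (hst : ∀ n, complexityZ x n = n + 1) {w w' : List (Fin 2)}
    (hw : RightSpecialZ y w) (hw' : RightSpecialZ y w')
    (hlen : w.length = w'.length) : w = w' := by
  -- auxiliary asymmetric case: w head = c, w' head ≠ c, |c::w'| = |w|+1
  have mixed : ∀ (w0 : List (Fin 2)) (d : Fin 2) (w0' : List (Fin 2)), d ≠ c →
      RightSpecialZ y (c :: w0) → RightSpecialZ y (d :: w0') →
      (c :: w0).length = (d :: w0').length → c :: w0 = d :: w0' := by
    intro w0 d w0' hd hcw hdw hl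
    have hW' : RightSpecialZ y (c :: d :: w0') := rs_y_cons hxy hd hdw
    obtain ⟨v, hv1, hv2, hv3, -⟩ := rs_y_form hxy hcw
    obtain ⟨u, hu1, hu2, hu3, -⟩ := rs_y_form hxy hW'
    -- lengths: |PhiW u| = |PhiW v| + 1
    have hlu : (PhiW c u).length = (PhiW c v).length + 1 := by
      have e1 : (c :: w0).length = (PhiW c v).length + 1 := by rw [hv1]; simp
      have e2 : (c :: d :: w0').length = (PhiW c u).length + 1 := by rw [hu1]; simp
      simp only [List.length_cons] at e1 e2 hl
      omega
    rcases le_total u.length v.length with hle | hle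
    · exfalso
      obtain ⟨t, rfl⟩ := rs_x_suffix_eq hst ⟨hu3, hu2⟩ ⟨hv3, hv2⟩ hle
      rw [PhiW_append, List.length_append] at hlu
      omega
    · obtain ⟨t, rfl⟩ := rs_x_suffix_eq hst ⟨hv3, hv2⟩ ⟨hu3, hu2⟩ hle
      rw [PhiW_append, List.length_append] at hlu
      have h2 : (PhiW c t).length = 1 := by omega
      have htl : t.length = 1 := by
        have h1 := PhiW_length_ge c t
        have h0 : t ≠ [] := by
          intro h
          rw [h] at h2
          simp at h2
        have := List.length_pos_iff.2 h0
        omega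
      obtain ⟨a, rfl⟩ := List.length_eq_one_iff.1 htl
      have hac : a = c := by
        apply phiC_length_eq_one (c := c)
        rw [PhiW_singleton] at h2
        exact h2
      exfalso
      have hfin : c :: d :: w0' = c :: c :: w0 := by
        rw [hu1, hac, PhiW_append, PhiW_singleton, phiC_self, hv1]
        simp
      simp only [List.cons.injEq] at hfin
      exact hd hfin.2.1
  -- main case analysis
  cases w with
  | nil =>
      cases w' with
      | nil => rfl
      | cons d' w0' => simp at hlen
  | cons d w0 =>
      cases w' with
      | nil => simp at hlen
      | cons d' w0' =>
          by_cases hd : d = c <;> by_cases hd' : d' = c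
          · subst hd; subst hd'
            rw [rs_y_unique_c hxy hst hw hw' (by simpa using hlen)]
          · subst hd
            exact mixed w0 d' w0' hd' hw hw' hlen
          · subst hd'
            exact (mixed w0' d w0 hd hw' hw hlen.symm).symm
          · have h1 : RightSpecialZ y (c :: d :: w0) := rs_y_cons hxy hd hw
            have h2 : RightSpecialZ y (c :: d' :: w0') := rs_y_cons hxy hd' hw'
            have := rs_y_unique_c hxy hst h1 h2 (by simpa using hlen)
            simpa using this

/-- existence + uniqueness: exactly one right special factor of `y` in each length -/
lemma rs_y_card_one (hst : ∀ n, complexityZ x n = n + 1) (n : ℕ) :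
    (rsF y n).card = 1 := by
  -- existence
  obtain ⟨r, hr⟩ := Finset.card_eq_one.1 (rs_card_one_of_sturmian hst n)
  have hrmem : r ∈ rsF x n := by rw [hr]; exact Finset.mem_singleton_self r
  obtain ⟨hrlen, hrfac, hrrs⟩ := mem_rsF.1 hrmem
  obtain ⟨hWfac, hWrs⟩ := rs_lift hxy hrfac hrrs
  set W := PhiW c r ++ [c] with hW
  have hWlen : n + 1 ≤ W.length := by
    have := PhiW_length_ge c r
    rw [hW, List.length_append]
    simp only [List.length_singleton]
    omega
  set s := W.drop (W.length - n) with hs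
  have hsplit : W = W.take (W.length - n) ++ s := (List.take_append_drop _ W).symm
  have hslen : s.length = n := by
    rw [hs, List.length_drop]
    omega
  have hsfac : IsFactorZ y s := isFactorZ_of_append_right (hsplit ▸ hWfac)
  have hsrs : RightSpecialZ y s := rs_suffix (hsplit ▸ hWrs)
  rw [Finset.card_eq_one]
  refine ⟨s, ?_⟩
  ext w
  rw [Finset.mem_singleton, mem_rsF]
  constructor
  · rintro ⟨h1, h2, h3⟩
    exact rs_y_unique hxy hst h3 hsrs (by rw [h1, hslen])
  · rintro rfl
    exact ⟨hslen, hsfac, hsrs⟩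

lemma complexity_y (hst : ∀ n, complexityZ x n = n + 1) (n : ℕ) :
    complexityZ y n = n + 1 :=
  complexity_of_rs_card_one (rs_y_card_one hxy hst) n

end RSY


open scoped Classical

section Periodicity

variable {c : Fin 2} {x y : ℤ → Fin 2} (hxy : IsSubstImage (phiC c) x y)

local notation "b" => blockStart (phiC c) x

lemma b_ge_self {i : ℤ} (h : 0 ≤ i) : i ≤ b i := by
  have := b_diff_ge (c := c) (x := x) h
  rw [blockStart_zero] at this
  omega

lemma b_le_self {i : ℤ} (h : i ≤ 0) : b i ≤ i := by
  have := b_diff_ge (c := c) (x := x) h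
  rw [blockStart_zero] at this
  omega

lemma b_mono {i j : ℤ} (h : i ≤ j) : b i ≤ b j := by
  have := b_diff_ge (c := c) (x := x) h
  omega

include hxy

lemma pos_periodic_transfer (h : PositivelyPeriodicZ y) : PositivelyPeriodicZ x := by
  obtain ⟨N, p, hp, hper⟩ := h
  set i₀ : ℤ := max N 0 with hi₀
  have hbN : N ≤ b i₀ := le_trans (le_max_left N 0) (b_ge_self (le_max_right N 0))
  have hc1 : y (b i₀ + p) = c := by
    rw [← hper (b i₀) hbN, y_bS hxy]
  obtain ⟨i₁, hi₁⟩ := blockStart_char hxy hc1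
  have hlt : i₀ < i₁ := by
    have hblt : b i₀ < b i₁ := by omega
    exact (b_strictMono (c := c) (x := x)).lt_iff_lt.1 hblt
  have claim : ∀ k : ℕ, b (i₀ + k) + p = b (i₁ + k) ∧ x (i₀ + k) = x (i₁ + k) := by
    intro k
    induction k with
    | zero =>
        refine ⟨by simpa using hi₁, ?_⟩
        rw [x_eq_y_bS_add_one hxy, x_eq_y_bS_add_one hxy]
        simp only [add_zero, Nat.cast_zero]
        rw [hper (b i₀ + 1) (by omega)]
        congr 1
        omega
    | succ k ih =>
        obtain ⟨ihb, ihx⟩ := ih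
        have hb1 : b (i₀ + k + 1) + p = b (i₁ + k + 1) := by
          rw [bS, bS, ihx]
          omega
        have hbigger : b i₀ ≤ b (i₀ + k + 1) := b_mono (by omega)
        have hx1 : x (i₀ + k + 1) = x (i₁ + k + 1) := by
          rw [x_eq_y_bS_add_one hxy, x_eq_y_bS_add_one hxy]
          rw [hper (b (i₀ + k + 1) + 1) (by omega)]
          congr 1
          omega
        constructor
        · have e : i₀ + ((k : ℕ) + 1 : ℕ) = i₀ + k + 1 := by push_cast; ring
          have e' : i₁ + ((k : ℕ) + 1 : ℕ) = i₁ + k + 1 := by push_cast; ring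
          rw [e, e']
          exact hb1
        · have e : i₀ + ((k : ℕ) + 1 : ℕ) = i₀ + k + 1 := by push_cast; ring
          have e' : i₁ + ((k : ℕ) + 1 : ℕ) = i₁ + k + 1 := by push_cast; ring
          rw [e, e']
          exact hx1
  refine ⟨i₀, (i₁ - i₀).toNat, by omega, ?_⟩
  intro n hn
  have hk : n = i₀ + ((n - i₀).toNat : ℤ) := by omega
  have := (claim (n - i₀).toNat).2
  rw [← hk] at this
  rw [this]
  congr 1
  omega

lemma neg_periodic_transfer (h : NegativelyPeriodicZ y) : NegativelyPeriodicZ x := by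
  obtain ⟨N, p, hp, hper⟩ := h
  set i₀ : ℤ := min N 0 with hi₀
  have hbN : b i₀ ≤ N := le_trans (b_le_self (min_le_right N 0)) (min_le_left N 0)
  have hc1 : y (b i₀ - p) = c := by
    rw [← hper (b i₀) hbN, y_bS hxy]
  obtain ⟨i₂, hi₂⟩ := blockStart_char hxy hc1
  have hlt : i₂ < i₀ := by
    have hblt : b i₂ < b i₀ := by omega
    exact (b_strictMono (c := c) (x := x)).lt_iff_lt.1 hblt
  have claim : ∀ k : ℕ, b (i₀ - k) - p = b (i₂ - k) ∧ x (i₀ - k - 1) = x (i₂ - k - 1) := by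
    intro k
    induction k with
    | zero =>
        refine ⟨by simpa using hi₂, ?_⟩
        rw [x_pred_eq_y_bS_sub_one hxy, x_pred_eq_y_bS_sub_one hxy]
        simp only [Nat.cast_zero, sub_zero]
        rw [hper (b i₀ - 1) (by omega)]
        congr 1
        omega
    | succ k ih =>
        obtain ⟨ihb, ihx⟩ := ih
        have hb1 : b (i₀ - k - 1) - p = b (i₂ - k - 1) := by
          rw [blockStart_pred, blockStart_pred, ihx]
          omega
        have hsmaller : b (i₀ - k - 1) ≤ b i₀ := b_mono (by omega)
        have hx1 : x (i₀ - k - 1 - 1) = x (i₂ - k - 1 - 1) := by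
          rw [x_pred_eq_y_bS_sub_one hxy, x_pred_eq_y_bS_sub_one hxy]
          rw [hper (b (i₀ - k - 1) - 1) (by omega)]
          congr 1
          omega
        have e : i₀ - ((k : ℕ) + 1 : ℕ) = i₀ - k - 1 := by push_cast; ring
        have e' : i₂ - ((k : ℕ) + 1 : ℕ) = i₂ - k - 1 := by push_cast; ring
        rw [e, e']
        exact ⟨hb1, hx1⟩
  refine ⟨i₀ - 1, (i₀ - i₂).toNat, by omega, ?_⟩
  intro n hn
  have hk : n = i₀ - ((i₀ - 1 - n).toNat : ℤ) - 1 := by omega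
  have := (claim (i₀ - 1 - n).toNat).2
  rw [← hk] at this
  rw [this]
  congr 1
  omega

lemma aperiodic_transfer (h : AperiodicZ x) : AperiodicZ y := by
  intro hy
  apply h
  rcases hy with hy | hy
  · exact Or.inl (pos_periodic_transfer hxy hy)
  · exact Or.inr (neg_periodic_transfer hxy hy)

end Periodicity

section Shift

variable {A : Type*}

lemma posPeriodic_of_shift {k : ℤ} {y : ℤ → A} (h : PositivelyPeriodicZ (shiftZ k y)) :
    PositivelyPeriodicZ y := by
  obtain ⟨N, p, hp, hper⟩ := h
  refine ⟨N + k, p, hp, ?_⟩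
  intro n hn
  have := hper (n - k) (by omega)
  simp only [shiftZ] at this
  have e1 : n - k + k = n := by ring
  have e2 : n - k + p + k = n + p := by ring
  rwa [e1, e2] at this

lemma negPeriodic_of_shift {k : ℤ} {y : ℤ → A} (h : NegativelyPeriodicZ (shiftZ k y)) :
    NegativelyPeriodicZ y := by
  obtain ⟨N, p, hp, hper⟩ := h
  refine ⟨N + k, p, hp, ?_⟩
  intro n hn
  have := hper (n - k) (by omega)
  simp only [shiftZ] at this
  have e1 : n - k + k = n := by ring
  have e2 : n - k - p + k = n - p := by ring
  rwa [e1, e2] at this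

lemma aperiodic_shift {k : ℤ} {y : ℤ → A} (h : AperiodicZ y) : AperiodicZ (shiftZ k y) := by
  intro hs
  apply h
  rcases hs with hs | hs
  · exact Or.inl (posPeriodic_of_shift hs)
  · exact Or.inr (negPeriodic_of_shift hs)

lemma complexityZ_shift (k : ℤ) (y : ℤ → Fin 2) (n : ℕ) :
    complexityZ (shiftZ k y) n = complexityZ y n := by
  rw [complexityZ_eq_card, complexityZ_eq_card]
  congr 1
  ext w
  rw [mem_factorsF, mem_factorsF, isFactorZ_shiftZ]

end Shift


open scoped Classical

section WindowBasics

lemma subwordZ_two {A : Type*} (z : ℤ → A) (i : ℤ) : subwordZ z i 2 = [z i, z (i + 1)] := by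
  have h1 : (2 : ℕ) = 1 + 1 := rfl
  rw [h1, subwordZ_succ, subwordZ_succ, subwordZ_zero]
  simp

lemma window_eq (z : ℤ → Fin 2) (n : ℕ) :
    subwordZ z (-(n : ℤ)) (2 * n + 2)
      = subwordZ z (-(n : ℤ)) n ++ [z 0, z 1] ++ subwordZ z 2 n := by
  have h1 : 2 * n + 2 = n + (2 + n) := by ring
  rw [h1, subwordZ_append, subwordZ_append]
  have e0 : -(n : ℤ) + (n : ℕ) = 0 := by simp
  rw [e0]
  have e2 : (0 : ℤ) + ((2 : ℕ) : ℤ) = 2 := by norm_num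
  rw [e2, subwordZ_two]
  simp [List.append_assoc]

lemma rs_shiftZ {k : ℤ} {z : ℤ → Fin 2} {w : List (Fin 2)} :
    RightSpecialZ (shiftZ k z) w ↔ RightSpecialZ z w := by
  unfold RightSpecialZ
  constructor <;> rintro ⟨a, b, hab, ha, hb⟩ <;>
    exact ⟨a, b, hab, by rwa [isFactorZ_shiftZ] at *, by rwa [isFactorZ_shiftZ] at *⟩

lemma ls_shiftZ {k : ℤ} {z : ℤ → Fin 2} {w : List (Fin 2)} :
    LeftSpecialZ (shiftZ k z) w ↔ LeftSpecialZ z w := by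
  unfold LeftSpecialZ
  constructor <;> rintro ⟨a, b, hab, ha, hb⟩ <;>
    exact ⟨a, b, hab, by rwa [isFactorZ_shiftZ] at *, by rwa [isFactorZ_shiftZ] at *⟩

lemma ls_ext {z : ℤ → Fin 2} {w : List (Fin 2)} (h : LeftSpecialZ z w) (e : Fin 2) :
    IsFactorZ z (e :: w) := by
  obtain ⟨a, b, hab, ha, hb⟩ := h
  rcases fin2_mem_pair (e := e) hab with rfl | rfl
  · exact ha
  · exact hb

end WindowBasics

section Master

variable {c : Fin 2} {x y : ℤ → Fin 2} (hxy : IsSubstImage (phiC c) x y)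

local notation "b" => blockStart (phiC c) x

include hxy

lemma ls_lift {v : List (Fin 2)} (hls : LeftSpecialZ x v) : LeftSpecialZ y (PhiW c v) := by
  obtain ⟨i1, h1⟩ := ls_ext hls c
  obtain ⟨i2, h2⟩ := ls_ext hls (c + 1)
  have hf1 : occursAt y (PhiW c (c :: v)) (b i1) := (occursAt_PhiW hxy _ i1 h1).1
  have hf2 : occursAt y (PhiW c ((c + 1) :: v)) (b i2) := (occursAt_PhiW hxy _ i2 h2).1
  rw [PhiW_cons, phiC_self] at hf1
  rw [PhiW_cons, phiC_other (fin2_add_one_ne c)] at hf2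
  refine ⟨c, c + 1, (fin2_add_one_ne c).symm, ⟨b i1, by simpa using hf1⟩, ?_⟩
  have : [c, c + 1] ++ PhiW c v = [c] ++ ((c + 1) :: PhiW c v) := by simp
  rw [this] at hf2
  exact isFactorZ_of_append_right ⟨b i2, hf2⟩

/-- the right window of `y` -/
lemma rs_window {n : ℕ} (hrs : RightSpecialZ x (subwordZ x (-(n : ℤ)) n)) :
    RightSpecialZ y (subwordZ y (1 - (n : ℤ)) n) := by
  set r := subwordZ x (-(n : ℤ)) n with hr
  have hrlen : r.length = n := subwordZ_length x _ n
  have hrfac : IsFactorZ x r := isFactorZ_subwordZ x _ n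
  obtain ⟨hWfac, hWrs⟩ := rs_lift hxy hrfac hrs
  have hocc : occursAt x r (-(n : ℤ)) := occursAt_subwordZ x _ n
  have hW : occursAt y (PhiW c r ++ [c]) (b (-(n : ℤ))) := occursAt_PhiW_c hxy hocc
  have hb0 : b (-(n : ℤ)) + ((PhiW c r).length : ℤ) = 0 := by
    have := (occursAt_PhiW hxy r (-(n : ℤ)) hocc).2
    rw [hrlen] at this
    have e : -(n : ℤ) + (n : ℕ) = 0 := by simp
    rw [e] at this
    rw [this, blockStart_zero]
  set P := (PhiW c r).length with hP
  have hPn : n ≤ P := hrlen ▸ PhiW_length_ge c r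
  have harg : b (-(n : ℤ)) + ((P + 1 - n : ℕ) : ℤ) = 1 - (n : ℤ) := by
    have e2 : ((P + 1 - n : ℕ) : ℤ) = (P : ℤ) + 1 - n := by omega
    omega
  have hsplit : subwordZ y (b (-(n : ℤ))) (P + 1)
      = subwordZ y (b (-(n : ℤ))) (P + 1 - n) ++ subwordZ y (1 - (n : ℤ)) n := by
    have e1 : P + 1 = (P + 1 - n) + n := by omega
    conv_lhs => rw [e1]
    rw [subwordZ_append, harg]
  have hWsub : subwordZ y (b (-(n : ℤ))) (P + 1) = PhiW c r ++ [c] := by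
    have : (PhiW c r ++ [c]).length = P + 1 := by simp [hP]
    rw [← this]
    exact hW
  rw [hsplit] at hWsub
  exact rs_suffix (t := subwordZ y (b (-(n : ℤ))) (P + 1 - n)) (hWsub ▸ hWrs)

lemma b_two (hne : x 0 ≠ x 1) : b 2 = 3 := by
  have h1 : b 1 = ((phiC c (x 0)).length : ℤ) := by
    have := bS (c := c) (x := x) 0
    rw [blockStart_zero] at this
    simpa using this
  have h2 : b 2 = b 1 + ((phiC c (x 1)).length : ℤ) := by
    have := bS (c := c) (x := x) 1
    norm_num at this
    exact this
  by_cases h0 : x 0 = c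
  · have h1c : x 1 ≠ c := fun hc => hne (h0.trans hc.symm)
    rw [h2, h1, h0, phiC_self, phiC_other h1c]
    rfl
  · have h1c : x 1 = c := by
      by_contra h1c
      exact hne (fin2_eq_of_ne h0 h1c)
    rw [h2, h1, h1c, phiC_self, phiC_other h0]
    rfl

/-- the left window of `y` -/
lemma ls_window {n : ℕ} (hne : x 0 ≠ x 1) (hls : LeftSpecialZ x (subwordZ x 2 n)) :
    LeftSpecialZ y (subwordZ y 3 n) := by
  set l := subwordZ x 2 n with hl
  have hllen : l.length = n := subwordZ_length x _ n
  have hLls : LeftSpecialZ y (PhiW c l) := ls_lift hxy hls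
  have hocc : occursAt x l 2 := occursAt_subwordZ x _ n
  have hL : occursAt y (PhiW c l) (b 2) := (occursAt_PhiW hxy l 2 hocc).1
  rw [b_two hxy hne] at hL
  set P := (PhiW c l).length with hP
  have hPn : n ≤ P := hllen ▸ PhiW_length_ge c l
  have hsplit : subwordZ y 3 P = subwordZ y 3 n ++ subwordZ y (3 + (n : ℤ)) (P - n) := by
    have e1 : P = n + (P - n) := by omega
    rw [e1, subwordZ_append]
    congr 2
    omega
  have hLsub : subwordZ y 3 P = PhiW c l := hL
  rw [hsplit] at hLsub
  exact ls_prefix (hLsub ▸ hLls)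

lemma middle_letters (hne : x 0 ≠ x 1) : y 1 = x 0 ∧ y 2 = x 1 := by
  have hb1 : b 1 = ((phiC c (x 0)).length : ℤ) := by
    have := bS (c := c) (x := x) 0
    rw [blockStart_zero] at this
    simpa using this
  by_cases h0 : x 0 = c
  · have hb1' : b 1 = 1 := by rw [hb1, h0, phiC_self]; rfl
    constructor
    · rw [show (1 : ℤ) = b 1 by omega, y_bS hxy, h0]
    · have := x_eq_y_bS_add_one hxy 1
      rw [hb1'] at this
      norm_num at this
      exact this.symm
  · have hb1' : b 1 = 2 := by rw [hb1, phiC_other h0]; rfl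
    have h1c : x 1 = c := by
      by_contra h1c
      exact hne (fin2_eq_of_ne h0 h1c)
    constructor
    · have := x_eq_y_bS_add_one hxy 0
      rw [blockStart_zero] at this
      norm_num at this
      exact this.symm
    · rw [show (2 : ℤ) = b 1 by omega, y_bS hxy, h1c]

/-- the master lemma -/
theorem master (hap : AperiodicZ x) (hst : ∀ n, complexityZ x n = n + 1)
    (hne : x 0 ≠ x 1)
    (hrs : ∀ n : ℕ, RightSpecialZ x (subwordZ x (-(n : ℤ)) n))
    (hls : ∀ n : ℕ, LeftSpecialZ x (subwordZ x 2 n)) :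
    SturmianZ (shiftZ 1 y) ∧ (shiftZ 1 y) 0 = x 0 ∧ (shiftZ 1 y) 1 = x 1 ∧
    (∀ n : ℕ, RightSpecialZ (shiftZ 1 y) (subwordZ (shiftZ 1 y) (-(n : ℤ)) n)) ∧
    (∀ n : ℕ, LeftSpecialZ (shiftZ 1 y) (subwordZ (shiftZ 1 y) 2 n)) := by
  obtain ⟨hy1, hy2⟩ := middle_letters hxy hne
  refine ⟨⟨aperiodic_shift (aperiodic_transfer hxy hap), fun n => by
      rw [complexityZ_shift]; exact complexity_y hxy hst n⟩, ?_, ?_, ?_, ?_⟩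
  · simpa [shiftZ] using hy1
  · simpa [shiftZ] using hy2
  · intro n
    rw [subwordZ_shiftZ]
    have e : -(n : ℤ) + 1 = 1 - n := by ring
    rw [e, rs_shiftZ]
    exact rs_window hxy (hrs n)
  · intro n
    rw [subwordZ_shiftZ]
    have e : (2 : ℤ) + 1 = 3 := by norm_num
    rw [e, ls_shiftZ]
    exact ls_window hxy hne (hls n)

end Master


open scoped Classical

section Final

lemma char_extract {x : ℤ → Fin 2} {a b : Fin 2}
    (h : ∀ n : ℕ, ∃ r l : List (Fin 2), r.length = n ∧ RightSpecialZ x r ∧ l.length = n ∧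
      LeftSpecialZ x l ∧ subwordZ x (-(n : ℤ)) (2 * n + 2) = r ++ [a, b] ++ l) :
    x 0 = a ∧ x 1 = b ∧ (∀ n : ℕ, RightSpecialZ x (subwordZ x (-(n : ℤ)) n)) ∧
      (∀ n : ℕ, LeftSpecialZ x (subwordZ x 2 n)) := by
  have main : ∀ n : ℕ, (x 0 = a ∧ x 1 = b) ∧ RightSpecialZ x (subwordZ x (-(n : ℤ)) n) ∧
      LeftSpecialZ x (subwordZ x 2 n) := by
    intro n
    obtain ⟨r, l, hr, hrs, hl, hls, heq0⟩ := h n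
    have heq := (window_eq x n).symm.trans heq0
    have hlen1 : (subwordZ x (-(n : ℤ)) n ++ [x 0, x 1]).length = (r ++ [a, b]).length := by
      simp [hr]
    have h34 := List.append_inj (List.append_inj heq hlen1).1 (by simp [hr])
    obtain ⟨hA, hmid⟩ := h34
    simp only [List.cons.injEq, and_true] at hmid
    refine ⟨⟨hmid.1, hmid.2⟩, ?_, ?_⟩
    · rw [hA]; exact hrs
    · rw [(List.append_inj heq hlen1).2]; exact hls
  exact ⟨(main 0).1.1, (main 0).1.2, fun n => (main n).2.1, fun n => (main n).2.2⟩

lemma char_build {x : ℤ → Fin 2} {a b : Fin 2}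
    (h0 : x 0 = a) (h1 : x 1 = b)
    (hrs : ∀ n : ℕ, RightSpecialZ x (subwordZ x (-(n : ℤ)) n))
    (hls : ∀ n : ℕ, LeftSpecialZ x (subwordZ x 2 n)) :
    ∀ n : ℕ, ∃ r l : List (Fin 2), r.length = n ∧ RightSpecialZ x r ∧ l.length = n ∧
      LeftSpecialZ x l ∧ subwordZ x (-(n : ℤ)) (2 * n + 2) = r ++ [a, b] ++ l :=
  fun n => ⟨subwordZ x (-(n : ℤ)) n, subwordZ x 2 n, subwordZ_length x _ n, hrs n,
    subwordZ_length x _ n, hls n, by rw [window_eq, h0, h1]⟩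

lemma main_case {c : Fin 2} {x y : ℤ → Fin 2} {a b : Fin 2} (hab : a ≠ b)
    (hxy : IsSubstImage (phiC c) x y)
    (hchar : SturmianZ x ∧ ∀ n : ℕ, ∃ r l : List (Fin 2),
      r.length = n ∧ RightSpecialZ x r ∧ l.length = n ∧ LeftSpecialZ x l ∧
      subwordZ x (-(n : ℤ)) (2 * n + 2) = r ++ [a, b] ++ l) :
    SturmianZ (shiftZ 1 y) ∧ ∀ n : ℕ, ∃ r l : List (Fin 2),
      r.length = n ∧ RightSpecialZ (shiftZ 1 y) r ∧ l.length = n ∧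
      LeftSpecialZ (shiftZ 1 y) l ∧
      subwordZ (shiftZ 1 y) (-(n : ℤ)) (2 * n + 2) = r ++ [a, b] ++ l := by
  obtain ⟨⟨hap, hst⟩, hwin⟩ := hchar
  obtain ⟨h0, h1, hrs, hls⟩ := char_extract hwin
  have hne : x 0 ≠ x 1 := by rw [h0, h1]; exact hab
  obtain ⟨hstur, hy0, hy1, hrs', hls'⟩ := master hxy hap hst hne hrs hls
  exact ⟨hstur, char_build (hy0.trans h0) (hy1.trans h1) hrs' hls'⟩

/-- If `x` is an upper (resp. lower) characteristic Sturmian word, then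
`S(L₀(x))` and `S(L₁(x))` are upper (resp. lower) characteristic Sturmian words. -/
theorem characteristic_image_L0_L1 (x : ℤ → Fin 2) :
    (UpperCharacteristic x →
      ∀ y : ℤ → Fin 2, IsSubstImage Lzero x y → UpperCharacteristic (shiftZ 1 y)) ∧
    (UpperCharacteristic x →
      ∀ y : ℤ → Fin 2, IsSubstImage Lone x y → UpperCharacteristic (shiftZ 1 y)) ∧
    (LowerCharacteristic x →
      ∀ y : ℤ → Fin 2, IsSubstImage Lzero x y → LowerCharacteristic (shiftZ 1 y)) ∧
    (LowerCharacteristic x →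
      ∀ y : ℤ → Fin 2, IsSubstImage Lone x y → LowerCharacteristic (shiftZ 1 y)) := by
  refine ⟨?_, ?_, ?_, ?_⟩ <;> intro h y hxy
  · rw [Lzero_eq_phiC] at hxy
    exact main_case (show (0 : Fin 2) ≠ 1 by decide) hxy h
  · rw [Lone_eq_phiC] at hxy
    exact main_case (show (0 : Fin 2) ≠ 1 by decide) hxy h
  · rw [Lzero_eq_phiC] at hxy
    exact main_case (show (1 : Fin 2) ≠ 0 by decide) hxy h
  · rw [Lone_eq_phiC] at hxy
    exact main_case (show (1 : Fin 2) ≠ 0 by decide) hxy h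

end Final
end

section
/- Let y ∈ {0,1}^ℤ, let x = L_0(y), and let Γ = [n, n+k] (an integer interval) be a string attractor of x. Then: (1) there exists m ∈ ℤ such that (L_0)_y^{-1}(Γ) = [m, m+ℓ], where ℓ = k minus the number of occurrences of the letter 1 in x_{[n+1, n+k]}; (2) the set [m−1, m+ℓ] is a string attractor of y; (3) if x_{n−1} x_n ≠ 00 then the position m−1 may be removed, and if x_{n+k} x_{n+k+1} = 01 then the position m+ℓ may be removed, and the resulting set is still a string attractor of y. -/
open scoped ENat Classical

namespace L0Aux

lemma fin2 (a : Fin 2) : a = 0 ∨ a = 1 := by omega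

lemma lz_ne (a : Fin 2) : Lzero a ≠ [] := by fin_cases a <;> simp [Lzero]

lemma lz_len (a : Fin 2) : 1 ≤ (Lzero a).length ∧ (Lzero a).length ≤ 2 := by
  fin_cases a <;> simp [Lzero]

lemma flatMap_sing {A B : Type*} (l : List A) (f : A → B) :
    (l.flatMap fun a => [f a]) = l.map f := by
  induction l with
  | nil => rfl
  | cons a l ih => simp [List.flatMap_cons, ih]

lemma subwordZ_def' {A : Type*} (x : ℤ → A) (i : ℤ) (n : ℕ) :
    subwordZ x i n = (List.range n).map (fun j : ℕ => x (i + (j : ℤ))) := by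
  unfold subwordZ
  simp [flatMap_sing, List.map_map]

lemma subwordZ_length {A : Type*} (x : ℤ → A) (i : ℤ) (n : ℕ) :
    (subwordZ x i n).length = n := by
  rw [subwordZ_def', List.length_map, List.length_range]

lemma subwordZ_add {A : Type*} (x : ℤ → A) (i : ℤ) (a b : ℕ) :
    subwordZ x i (a + b) = subwordZ x i a ++ subwordZ x (i + (a : ℤ)) b := by
  simp only [subwordZ_def', List.range_add, List.map_append, List.map_map]
  congr 1
  apply List.map_congr_left
  intro j _
  simp only [Function.comp_apply]
  congr 1
  push_cast
  ring

lemma subwordZ_one {A : Type*} (x : ℤ → A) (i : ℤ) : subwordZ x i 1 = [x i] := by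
  rw [subwordZ_def']
  norm_num [show List.range 1 = [0] from rfl]

lemma occursAt_nil {A : Type*} (x : ℤ → A) (i : ℤ) : occursAt x [] i := rfl

lemma occursAt_append {A : Type*} (x : ℤ → A) (u v : List A) (i : ℤ) :
    occursAt x (u ++ v) i ↔ occursAt x u i ∧ occursAt x v (i + (u.length : ℤ)) := by
  unfold occursAt
  rw [List.length_append, subwordZ_add]
  constructor
  · intro h
    exact ⟨(List.append_inj h (subwordZ_length x i u.length)).1,
      (List.append_inj h (subwordZ_length x i u.length)).2⟩
  · rintro ⟨h1, h2⟩; rw [h1, h2]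

lemma occursAt_single {A : Type*} (x : ℤ → A) (a : A) (i : ℤ) :
    occursAt x [a] i ↔ x i = a := by
  unfold occursAt
  rw [List.length_singleton, subwordZ_one]
  simp

lemma occursAt_cons {A : Type*} (x : ℤ → A) (a : A) (u : List A) (i : ℤ) :
    occursAt x (a :: u) i ↔ x i = a ∧ occursAt x u (i + 1) := by
  rw [show a :: u = [a] ++ u from rfl, occursAt_append, occursAt_single]
  simp

lemma bStart_zero {A B : Type*} (φ : A → List B) (z : ℤ → A) :
    blockStart φ z 0 = 0 := by
  unfold blockStart
  norm_num

lemma bStart_nonneg {A B : Type*} (φ : A → List B) (z : ℤ → A) (i : ℤ) (h : 0 ≤ i) :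
    blockStart φ z i
      = ((List.range i.toNat).map (fun j : ℕ => ((φ (z (j : ℤ))).length : ℤ))).sum := by
  unfold blockStart
  rw [if_pos h]
  congr 1
  induction (List.range i.toNat) with
  | nil => rfl
  | cons a l ih => simpa using ih

lemma bStart_neg {A B : Type*} (φ : A → List B) (z : ℤ → A) (i : ℤ) (h : i < 0) :
    blockStart φ z i
      = -((List.range (-i).toNat).map
          (fun j : ℕ => ((φ (z (-(j : ℤ) - 1))).length : ℤ))).sum := by
  unfold blockStart
  rw [if_neg (by omega)]
  congr 2
  induction (List.range (-i).toNat) with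
  | nil => rfl
  | cons a l ih => simpa using ih

lemma bStart_succ {A B : Type*} (φ : A → List B) (z : ℤ → A) (i : ℤ) :
    blockStart φ z (i + 1) = blockStart φ z i + ((φ (z i)).length : ℤ) := by
  rcases le_or_gt 0 i with h | h
  · rw [bStart_nonneg φ z i h, bStart_nonneg φ z (i + 1) (by omega)]
    have h1 : (i + 1).toNat = i.toNat + 1 := by omega
    rw [h1, List.range_succ, List.map_append, List.sum_append]
    simp [Int.toNat_of_nonneg h]
  · rcases eq_or_lt_of_le (show i + 1 ≤ 0 by omega) with h1 | h1
    · have hi : i = -1 := by omega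
      subst hi
      rw [bStart_neg φ z (-1) (by omega)]
      norm_num [bStart_zero, show List.range 1 = [0] from rfl]
    · rw [bStart_neg φ z i h, bStart_neg φ z (i + 1) (by omega)]
      have h2 : (-i).toNat = (-(i + 1)).toNat + 1 := by omega
      rw [h2, List.range_succ, List.map_append, List.sum_append]
      simp only [List.map_cons, List.map_nil, List.sum_cons, List.sum_nil]
      have h4 : -(((-(i + 1)).toNat : ℕ) : ℤ) - 1 = i := by
        have := Int.toNat_of_nonneg (show (0:ℤ) ≤ -(i+1) by omega)
        omega
      rw [h4]
      ring

lemma bStart_bounds (y : ℤ → Fin 2) (i j : ℤ) (hij : i ≤ j) :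
    blockStart Lzero y i + (j - i) ≤ blockStart Lzero y j ∧
    blockStart Lzero y j ≤ blockStart Lzero y i + 2 * (j - i) := by
  refine Int.le_induction (motive := fun j _ => blockStart Lzero y i + (j - i) ≤ blockStart Lzero y j ∧
    blockStart Lzero y j ≤ blockStart Lzero y i + 2 * (j - i)) ?_ ?_ j hij
  · omega
  · intro j hij ih
    have h1 := bStart_succ Lzero y j
    have h2 := lz_len (y j)
    omega

lemma bStart_mono (y : ℤ → Fin 2) {i j : ℤ} (hij : i ≤ j) :
    blockStart Lzero y i ≤ blockStart Lzero y j := by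
  have := bStart_bounds y i j hij; omega

end L0Aux

namespace L0Aux

lemma find_block (y : ℤ → Fin 2) (p q0 : ℤ) (h0 : blockStart Lzero y q0 ≤ p) :
    ∀ tmax : ℕ, p < blockStart Lzero y (q0 + tmax + 1) →
      ∃ q, blockStart Lzero y q ≤ p ∧ p < blockStart Lzero y (q + 1) := by
  intro tmax
  induction tmax with
  | zero => intro h; exact ⟨q0, h0, by simpa using h⟩
  | succ t ih =>
    intro h
    by_cases hc : p < blockStart Lzero y (q0 + t + 1)
    · exact ih hc
    · refine ⟨q0 + t + 1, by omega, ?_⟩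
      have : q0 + ((t : ℤ) + 1) + 1 = (q0 + t + 1) + 1 := by ring
      push_cast at h
      rw [this] at h
      exact h

lemma exists_bIdx (y : ℤ → Fin 2) (p : ℤ) :
    ∃ q, blockStart Lzero y q ≤ p ∧ p < blockStart Lzero y (q + 1) := by
  have hb0 : blockStart Lzero y (-(p.natAbs : ℤ) - 1) ≤ p := by
    have h1 := bStart_bounds y (-(p.natAbs : ℤ) - 1) 0 (by omega)
    have h2 := bStart_zero Lzero y
    omega
  refine find_block y p (-(p.natAbs : ℤ) - 1) hb0 (2 * p.natAbs + 1) ?_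
  have hidx : (-(p.natAbs : ℤ) - 1) + ((2 * p.natAbs + 1 : ℕ) : ℤ) + 1 = (p.natAbs : ℤ) + 1 := by
    push_cast
    ring
  rw [hidx]
  have h1 := bStart_bounds y 0 ((p.natAbs : ℤ) + 1) (by omega)
  have h2 := bStart_zero Lzero y
  omega

noncomputable def bIdx (y : ℤ → Fin 2) (p : ℤ) : ℤ := (exists_bIdx y p).choose

lemma bIdx_spec (y : ℤ → Fin 2) (p : ℤ) :
    blockStart Lzero y (bIdx y p) ≤ p ∧ p < blockStart Lzero y (bIdx y p + 1) :=
  (exists_bIdx y p).choose_spec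

lemma le_bIdx_of (y : ℤ → Fin 2) {r p : ℤ} (h : blockStart Lzero y r ≤ p) : r ≤ bIdx y p := by
  by_contra hc
  have h1 := bStart_mono y (show bIdx y p + 1 ≤ r by omega)
  have h2 := bIdx_spec y p
  omega

lemma bIdx_lt_of (y : ℤ → Fin 2) {r p : ℤ} (h : p < blockStart Lzero y r) : bIdx y p < r := by
  by_contra hc
  have h1 := bStart_mono y (show r ≤ bIdx y p by omega)
  have h2 := bIdx_spec y p
  omega

lemma bIdx_unique (y : ℤ → Fin 2) {q p : ℤ} (h1 : blockStart Lzero y q ≤ p)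
    (h2 : p < blockStart Lzero y (q + 1)) : bIdx y p = q := by
  have := le_bIdx_of y h1
  have := bIdx_lt_of y h2
  omega

section WithHx

variable {y x : ℤ → Fin 2} (hx : IsSubstImage Lzero y x)
include hx

lemma block_occ (i : ℤ) : occursAt x (Lzero (y i)) (blockStart Lzero y i) := hx.2 i

lemma x_bStart (i : ℤ) : x (blockStart Lzero y i) = 0 := by
  have h := block_occ hx i
  rcases fin2 (y i) with h0 | h1
  · rw [h0] at h
    exact (occursAt_single x 0 _).mp h
  · rw [h1] at h
    exact ((occursAt_cons x 0 _ _).mp h).1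

lemma x_block1 {i : ℤ} (h : y i = 1) : x (blockStart Lzero y i + 1) = 1 := by
  have hb := block_occ hx i
  rw [h] at hb
  have := ((occursAt_cons x 0 _ _).mp hb).2
  exact (occursAt_single x 1 _).mp this

omit hx in
lemma bStart_succ0 {i : ℤ} (h : y i = 0) :
    blockStart Lzero y (i + 1) = blockStart Lzero y i + 1 := by
  rw [bStart_succ, h]; rfl

omit hx in
lemma bStart_succ1 {i : ℤ} (h : y i = 1) :
    blockStart Lzero y (i + 1) = blockStart Lzero y i + 2 := by
  rw [bStart_succ, h]; rfl

lemma x_zero_iff (p : ℤ) : x p = 0 ↔ ∃ i, blockStart Lzero y i = p := by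
  constructor
  · intro h
    obtain ⟨q, hq1, hq2⟩ := exists_bIdx y p
    rcases eq_or_lt_of_le hq1 with h1 | h1
    · exact ⟨q, h1⟩
    · exfalso
      have hb := bStart_succ Lzero y q
      have hl := lz_len (y q)
      have hp : p = blockStart Lzero y q + 1 := by omega
      have hy : y q = 1 := by
        rcases fin2 (y q) with h0 | h0
        · exfalso
          have := bStart_succ0 (y := y) h0
          omega
        · exact h0
      have := x_block1 hx hy
      rw [← hp] at this
      rw [this] at h
      exact absurd h (by decide)
  · rintro ⟨i, rfl⟩
    exact x_bStart hx i

lemma bIdx_succ (p : ℤ) :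
    bIdx y (p + 1) = if x (p + 1) = 0 then bIdx y p + 1 else bIdx y p := by
  have hs := bIdx_spec y p
  have hb := bStart_succ Lzero y (bIdx y p)
  have hl := lz_len (y (bIdx y p))
  split_ifs with h
  · obtain ⟨i, hi⟩ := (x_zero_iff hx (p + 1)).mp h
    have hiq : bIdx y p + 1 ≤ i := by
      by_contra hc
      have := bStart_mono y (show i ≤ bIdx y p by omega)
      omega
    have hmono : blockStart Lzero y (bIdx y p + 1) ≤ blockStart Lzero y i := bStart_mono y hiq
    have h1 : blockStart Lzero y (bIdx y p + 1) = p + 1 := by omega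
    apply bIdx_unique
    · omega
    · have := bStart_succ Lzero y (bIdx y p + 1)
      have := lz_len (y (bIdx y p + 1))
      omega
  · apply bIdx_unique
    · omega
    · rcases eq_or_lt_of_le (show p + 1 ≤ blockStart Lzero y (bIdx y p + 1) by omega) with h1 | h1
      · exact absurd (h1 ▸ x_bStart hx (bIdx y p + 1)) h
      · omega

lemma count_formula (n : ℤ) (k : ℕ) :
    (bIdx y (n + k) : ℤ) = bIdx y n + k - ((subwordZ x (n + 1) k).count 1 : ℤ) := by
  induction k with
  | zero => simp [show subwordZ x (n+1) 0 = [] from rfl]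
  | succ k ih =>
    have hsp : subwordZ x (n + 1) (k + 1)
        = subwordZ x (n + 1) k ++ [x (n + 1 + k)] := by
      rw [subwordZ_add, subwordZ_one]
    have hc : n + ((k : ℤ) + 1) = (n + k) + 1 := by ring
    have hb := bIdx_succ hx (n + k)
    rw [hsp, List.count_append]
    push_cast
    rw [hc, hb]
    have harg : n + 1 + (k : ℤ) = n + (k : ℤ) + 1 := by ring
    rw [harg]
    rcases fin2 (x (n + (k : ℤ) + 1)) with h0 | h1
    · rw [h0, if_pos rfl]
      simp only [List.count_cons, List.count_nil]
      norm_num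
      omega
    · rw [h1, if_neg (by decide)]
      simp only [List.count_cons, List.count_nil]
      norm_num
      omega

end WithHx

end L0Aux

namespace L0Aux

section WithHx

variable {y x : ℤ → Fin 2} (hx : IsSubstImage Lzero y x)
include hx

lemma decode : ∀ (w : List (Fin 2)) (j : ℤ),
    occursAt x (w.flatMap Lzero) (blockStart Lzero y j) →
    (w.getLast? = some 1 ∨ x (blockStart Lzero y j + ((w.flatMap Lzero).length : ℤ)) = 0) →
    occursAt y w j ∧
    blockStart Lzero y (j + w.length) = blockStart Lzero y j + ((w.flatMap Lzero).length : ℤ) := by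
  intro w
  induction w with
  | nil => intro j _ _; exact ⟨occursAt_nil y j, by simp⟩
  | cons a w ih =>
    intro j h h0
    rw [List.flatMap_cons] at h
    obtain ⟨h1, h2⟩ := (occursAt_append x (Lzero a) (w.flatMap Lzero) _).mp h
    have hyj : y j = a := by
      rcases fin2 a with ha | ha <;> rcases fin2 (y j) with hy | hy
      · rw [ha, hy]
      · -- a = 0, y j = 1
        exfalso
        subst ha
        have hx1 : x (blockStart Lzero y j + 1) = 1 := x_block1 hx hy
        have hx0 : x (blockStart Lzero y j + 1) = 0 := by
          cases w with
          | nil =>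
            rcases h0 with h0 | h0
            · exact absurd h0 (by decide)
            · simpa [show Lzero 0 = [0] by decide] using h0
          | cons b w' =>
            rw [List.flatMap_cons] at h2
            have := ((occursAt_append x (Lzero b) _ _).mp h2).1
            have hlen : ((Lzero 0).length : ℤ) = 1 := rfl
            rw [hlen] at this
            rcases fin2 b with hb | hb
            · rw [hb] at this
              exact ((occursAt_cons x 0 _ _).mp this).1
            · rw [hb] at this
              exact ((occursAt_cons x 0 _ _).mp this).1
        rw [hx1] at hx0
        exact absurd hx0 (by decide)
      · -- a = 1, y j = 0
        exfalso
        subst ha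
        rw [show Lzero 1 = [0, 1] from rfl] at h1
        have hx1 : x (blockStart Lzero y j + 1) = 1 :=
          ((occursAt_cons x 1 _ _).mp ((occursAt_cons x 0 _ _).mp h1).2).1
        have hb := bStart_succ0 (y := y) hy
        have hx0 := x_bStart hx (j + 1)
        rw [hb] at hx0
        rw [hx1] at hx0
        exact absurd hx0 (by decide)
      · rw [ha, hy]
    have hb1 : blockStart Lzero y (j + 1) = blockStart Lzero y j + ((Lzero a).length : ℤ) := by
      rw [bStart_succ, hyj]
    have h2' : occursAt x (w.flatMap Lzero) (blockStart Lzero y (j + 1)) := by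
      rw [hb1]; exact h2
    have h0' : w.getLast? = some 1 ∨
        x (blockStart Lzero y (j + 1) + ((w.flatMap Lzero).length : ℤ)) = 0 := by
      cases w with
      | nil => right; simpa using x_bStart hx (j + 1)
      | cons c w' =>
        rcases h0 with h0 | h0
        · left; rwa [List.getLast?_cons_cons] at h0
        · right
          have harg : blockStart Lzero y j + (((a :: (c :: w')).flatMap Lzero).length : ℤ)
              = blockStart Lzero y (j + 1) + (((c :: w').flatMap Lzero).length : ℤ) := by
            rw [show (a :: c :: w').flatMap Lzero = Lzero a ++ (c :: w').flatMap Lzero from List.flatMap_cons .., List.length_append]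
            push_cast
            omega
          rwa [harg] at h0
    obtain ⟨ih1, ih2⟩ := ih (j + 1) h2' h0'
    refine ⟨(occursAt_cons y a w j).mpr ⟨hyj, ih1⟩, ?_⟩
    have hlen : j + ((a :: w).length : ℤ) = (j + 1) + (w.length : ℤ) := by
      rw [List.length_cons]; push_cast; ring
    rw [hlen, ih2, hb1, List.flatMap_cons, List.length_append]
    push_cast
    ring

lemma encode : ∀ (w : List (Fin 2)) (j : ℤ), occursAt y w j →
    occursAt x (w.flatMap Lzero) (blockStart Lzero y j) ∧
    blockStart Lzero y (j + w.length) = blockStart Lzero y j + ((w.flatMap Lzero).length : ℤ) := by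
  intro w
  induction w with
  | nil => intro j _; exact ⟨occursAt_nil x _, by simp⟩
  | cons a w ih =>
    intro j h
    obtain ⟨hyj, hw⟩ := (occursAt_cons y a w j).mp h
    have hb1 : blockStart Lzero y (j + 1) = blockStart Lzero y j + ((Lzero a).length : ℤ) := by
      rw [bStart_succ, hyj]
    obtain ⟨ih1, ih2⟩ := ih (j + 1) hw
    constructor
    · rw [List.flatMap_cons, occursAt_append]
      refine ⟨hyj ▸ block_occ hx j, ?_⟩
      rw [← hb1]; exact ih1
    · have hlen : j + ((a :: w).length : ℤ) = (j + 1) + (w.length : ℤ) := by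
        rw [List.length_cons]; push_cast; ring
      rw [hlen, ih2, hb1, List.flatMap_cons, List.length_append]
      push_cast
      ring

end WithHx

lemma preimage_Icc (y : ℤ → Fin 2) (n : ℤ) (k : ℕ) :
    substPreimage Lzero y (Set.Icc n (n + (k : ℤ)))
      = Set.Icc (bIdx y n) (bIdx y (n + (k : ℤ))) := by
  ext i
  simp only [substPreimage, Set.mem_setOf_eq, Set.mem_Icc]
  have hb := bStart_succ Lzero y i
  have hsn := bIdx_spec y n
  have hsk := bIdx_spec y (n + (k : ℤ))
  constructor
  · rintro ⟨p, hp, h1, h2⟩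
    constructor
    · by_contra hc
      have := bStart_mono y (show i + 1 ≤ bIdx y n by omega)
      omega
    · by_contra hc
      have := bStart_mono y (show bIdx y (n + (k : ℤ)) + 1 ≤ i by omega)
      omega
  · rintro ⟨h1, h2⟩
    have hm1 : blockStart Lzero y i ≤ blockStart Lzero y (bIdx y (n + (k : ℤ))) :=
      bStart_mono y h2
    have hm2 : blockStart Lzero y (bIdx y n + 1) ≤ blockStart Lzero y (i + 1) :=
      bStart_mono y (by omega)
    have hl := lz_len (y i)
    refine ⟨max n (blockStart Lzero y i), ⟨?_, ?_⟩, ?_, ?_⟩ <;> omega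

end L0Aux

namespace L0Aux

section WithHx

variable {y x : ℤ → Fin 2} (hx : IsSubstImage Lzero y x)
include hx

lemma dec_one (w₂ : List (Fin 2)) (i₁ : ℤ)
    (h : occursAt x (1 :: w₂.flatMap Lzero) i₁)
    (h0 : w₂ ≠ [] → (w₂.getLast? = some 1 ∨
        x (i₁ + 1 + ((w₂.flatMap Lzero).length : ℤ)) = 0)) :
    ∃ j, y j = 1 ∧ blockStart Lzero y j + 1 = i₁ ∧ occursAt y w₂ (j + 1) ∧
      blockStart Lzero y (j + 1 + (w₂.length : ℤ))
        = i₁ + 1 + ((w₂.flatMap Lzero).length : ℤ) := by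
  obtain ⟨hx1, hrest⟩ := (occursAt_cons x 1 _ i₁).mp h
  obtain ⟨q, hq1, hq2⟩ := exists_bIdx y i₁
  have hxq := x_bStart hx q
  have hne : blockStart Lzero y q ≠ i₁ := by
    intro he
    rw [he, hx1] at hxq
    exact absurd hxq (by decide)
  have hbs := bStart_succ Lzero y q
  have hll := lz_len (y q)
  have hi1 : i₁ = blockStart Lzero y q + 1 := by omega
  have hy1 : y q = 1 := by
    rcases fin2 (y q) with h' | h'
    · exfalso; have := bStart_succ0 (y := y) h'; omega
    · exact h'
  have hb2 : blockStart Lzero y (q + 1) = i₁ + 1 := by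
    have := bStart_succ1 (y := y) hy1; omega
  have h0' : w₂.getLast? = some 1 ∨
      x (blockStart Lzero y (q + 1) + ((w₂.flatMap Lzero).length : ℤ)) = 0 := by
    cases w₂ with
    | nil => right; simpa using x_bStart hx (q + 1)
    | cons c t =>
      rcases h0 (by simp) with h' | h'
      · exact Or.inl h'
      · right; rw [hb2]; exact h'
  obtain ⟨hd1, hd2⟩ := decode hx w₂ (q + 1) (by rw [hb2]; exact hrest) h0'
  exact ⟨q, hy1, by omega, hd1, by rw [hd2, hb2]⟩

lemma pack_lemma (w : List (Fin 2)) (a b : Fin 2) (w₂ w₁ : List (Fin 2))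
    (hcons : w = a :: w₂) (hcat : w = w₁ ++ [b]) :
    ∃ (v : List (Fin 2)) (off tl : ℤ),
      ((off = 0 ∧ a = 0) ∨ (off = 1 ∧ a = 1)) ∧ (tl = 0 ∨ tl = 1) ∧ v ≠ [] ∧
      (∀ j, occursAt y w j → occursAt x v (blockStart Lzero y j + off)) ∧
      (∀ i₁, occursAt x v i₁ → ∃ j, occursAt y w j ∧ blockStart Lzero y j + off = i₁ ∧
         blockStart Lzero y (j + (w.length : ℤ)) + tl = i₁ + (v.length : ℤ)) ∧
      (tl = 1 → ∀ i₁, occursAt x v i₁ → x (i₁ + (v.length : ℤ) - 2) = 0) := by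
  rcases fin2 a with ha | ha <;> rcases fin2 b with hb | hb
  · -- a = 0, b = 0 : v = fl w ++ [0]
    refine ⟨w.flatMap Lzero ++ [0], 0, 1, Or.inl ⟨rfl, ha⟩, Or.inr rfl, by simp, ?_, ?_, ?_⟩
    · intro j hj
      obtain ⟨he1, he2⟩ := encode hx w j hj
      rw [add_zero, occursAt_append]
      refine ⟨he1, (occursAt_single x 0 _).mpr ?_⟩
      rw [← he2]
      exact x_bStart hx _
    · intro i₁ h
      rw [occursAt_append] at h
      obtain ⟨h1, h2⟩ := h
      have hx0 : x i₁ = 0 := by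
        rw [hcons, List.flatMap_cons, ha, show Lzero 0 = [0] by decide] at h1
        exact (occursAt_single x 0 i₁).mp ((occursAt_append x [0] _ _).mp h1).1
      obtain ⟨j, hj⟩ := (x_zero_iff hx i₁).mp hx0
      have h2' : x (i₁ + ((w.flatMap Lzero).length : ℤ)) = 0 := (occursAt_single x 0 _).mp h2
      obtain ⟨hd1, hd2⟩ := decode hx w j (by rw [hj]; exact h1) (Or.inr (by rw [hj]; exact h2'))
      refine ⟨j, hd1, by omega, ?_⟩
      have hvl : (((w.flatMap Lzero ++ [0]).length : ℕ) : ℤ)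
          = ((w.flatMap Lzero).length : ℤ) + 1 := by
        push_cast [List.length_append]
        norm_num
      omega
    · intro _ i₁ h
      have hv : w.flatMap Lzero ++ [0] = w₁.flatMap Lzero ++ [0, 0] := by
        rw [hcat, hb, List.flatMap_append]
        simp [show Lzero 0 = [0] by decide]
      rw [hv, occursAt_append] at h
      have h2 := ((occursAt_cons x 0 _ _).mp h.2).1
      have hvl : (((w.flatMap Lzero ++ [0]).length : ℕ) : ℤ)
          = ((w₁.flatMap Lzero).length : ℤ) + 2 := by
        rw [hv]
        push_cast [List.length_append]
        norm_num
      have harg : i₁ + ((w.flatMap Lzero ++ [0]).length : ℤ) - 2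
          = i₁ + ((w₁.flatMap Lzero).length : ℤ) := by omega
      rw [harg]
      exact h2
  · -- a = 0, b = 1 : v = fl w
    refine ⟨w.flatMap Lzero, 0, 0, Or.inl ⟨rfl, ha⟩, Or.inl rfl, ?_, ?_, ?_,
      fun h => absurd h (by norm_num)⟩
    · rw [hcons, List.flatMap_cons]
      intro he
      exact lz_ne a (List.append_eq_nil_iff.mp he).1
    · intro j hj
      rw [add_zero]
      exact (encode hx w j hj).1
    · intro i₁ h
      have hx0 : x i₁ = 0 := by
        rw [hcons, List.flatMap_cons, ha, show Lzero 0 = [0] by decide] at h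
        exact (occursAt_single x 0 i₁).mp ((occursAt_append x [0] _ _).mp h).1
      obtain ⟨j, hj⟩ := (x_zero_iff hx i₁).mp hx0
      have hlast : w.getLast? = some 1 := by
        rw [hcat, hb]
        exact List.getLast?_concat
      obtain ⟨hd1, hd2⟩ := decode hx w j (by rw [hj]; exact h) (Or.inl hlast)
      exact ⟨j, hd1, by omega, by omega⟩
  · -- a = 1, b = 0 : v = (1 :: fl w₂) ++ [0]
    refine ⟨(1 :: w₂.flatMap Lzero) ++ [0], 1, 1, Or.inr ⟨rfl, ha⟩, Or.inr rfl, by simp,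
      ?_, ?_, ?_⟩
    · intro j hj
      obtain ⟨he1, he2⟩ := encode hx w j hj
      have hfl : w.flatMap Lzero = 0 :: 1 :: w₂.flatMap Lzero := by
        rw [hcons, ha, List.flatMap_cons, show Lzero 1 = [0, 1] by decide]
        rfl
      rw [hfl] at he1
      have hmid := ((occursAt_cons x 0 _ _).mp he1).2
      rw [occursAt_append]
      refine ⟨hmid, (occursAt_single x 0 _).mpr ?_⟩
      have hl : (((1 :: w₂.flatMap Lzero).length : ℕ) : ℤ)
          = ((w₂.flatMap Lzero).length : ℤ) + 1 := by push_cast [List.length_cons]; ring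
      have hfl2 : ((w.flatMap Lzero).length : ℤ) = ((w₂.flatMap Lzero).length : ℤ) + 2 := by
        rw [hfl]
        push_cast [List.length_cons]
        ring
      have harg : blockStart Lzero y j + 1 + (((1 :: w₂.flatMap Lzero).length : ℕ) : ℤ)
          = blockStart Lzero y (j + (w.length : ℤ)) := by omega
      rw [harg]
      exact x_bStart hx _
    · intro i₁ h
      rw [occursAt_append] at h
      obtain ⟨h1, h2⟩ := h
      have h2' : x (i₁ + 1 + ((w₂.flatMap Lzero).length : ℤ)) = 0 := by
        have h3 := (occursAt_single x 0 _).mp h2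
        have harg : i₁ + (((1 :: w₂.flatMap Lzero).length : ℕ) : ℤ)
            = i₁ + 1 + ((w₂.flatMap Lzero).length : ℤ) := by
          push_cast [List.length_cons]
          ring
        rwa [harg] at h3
      obtain ⟨j, hy1, hji, hw2occ, hend⟩ := dec_one hx w₂ i₁ h1 (fun _ => Or.inr h2')
      refine ⟨j, ?_, by omega, ?_⟩
      · rw [hcons]
        exact (occursAt_cons y a w₂ j).mpr ⟨by rw [ha]; exact hy1, hw2occ⟩
      · have hwl : (w.length : ℤ) = (w₂.length : ℤ) + 1 := by
          rw [hcons]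
          push_cast [List.length_cons]
          ring
        have hvl : ((((1 :: w₂.flatMap Lzero) ++ [0]).length : ℕ) : ℤ)
            = ((w₂.flatMap Lzero).length : ℤ) + 2 := by
          push_cast [List.length_append, List.length_cons]
          simp
          omega
        have harg : j + (w.length : ℤ) = j + 1 + (w₂.length : ℤ) := by omega
        rw [harg]
        omega
    · intro _ i₁ h
      have hw₁ : w₁ ≠ [] := by
        intro he
        rw [he, List.nil_append] at hcat
        rw [hcat] at hcons
        injection hcons with h1 h2
        rw [ha, hb] at h1
        exact absurd h1 (by decide)
      have hw₂ : w₂ = w₁.tail ++ [0] := by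
        have h' : a :: w₂ = w₁ ++ [b] := by rw [← hcons, hcat]
        have h'' := congrArg List.tail h'
        rwa [List.tail_cons, List.tail_append_of_ne_nil hw₁, hb] at h''
      have hv : (1 :: w₂.flatMap Lzero) ++ [0] = (1 :: (w₁.tail).flatMap Lzero) ++ [0, 0] := by
        rw [hw₂, List.flatMap_append]
        simp [show Lzero 0 = [0] by decide]
      rw [hv, occursAt_append] at h
      have h2 := ((occursAt_cons x 0 _ _).mp h.2).1
      have hvl : ((((1 :: w₂.flatMap Lzero) ++ [0]).length : ℕ) : ℤ)
          = ((1 :: (w₁.tail).flatMap Lzero).length : ℤ) + 2 := by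
        rw [hv]
        push_cast [List.length_append, List.length_cons]
        simp
      have harg : i₁ + (((1 :: w₂.flatMap Lzero) ++ [0]).length : ℤ) - 2
          = i₁ + ((1 :: (w₁.tail).flatMap Lzero).length : ℤ) := by omega
      rw [harg]
      exact h2
  · -- a = 1, b = 1 : v = 1 :: fl w₂
    refine ⟨1 :: w₂.flatMap Lzero, 1, 0, Or.inr ⟨rfl, ha⟩, Or.inl rfl, by simp, ?_, ?_,
      fun h => absurd h (by norm_num)⟩
    · intro j hj
      obtain ⟨he1, he2⟩ := encode hx w j hj
      have hfl : w.flatMap Lzero = 0 :: 1 :: w₂.flatMap Lzero := by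
        rw [hcons, ha, List.flatMap_cons, show Lzero 1 = [0, 1] by decide]
        rfl
      rw [hfl] at he1
      exact ((occursAt_cons x 0 _ _).mp he1).2
    · intro i₁ h
      have h0 : w₂ ≠ [] → (w₂.getLast? = some 1 ∨
          x (i₁ + 1 + ((w₂.flatMap Lzero).length : ℤ)) = 0) := by
        intro hne
        left
        obtain ⟨c, t, hct⟩ := List.exists_cons_of_ne_nil hne
        have h1 : w.getLast? = some 1 := by
          rw [hcat, hb]
          exact List.getLast?_concat
        rw [hcons, hct, List.getLast?_cons_cons] at h1
        rw [hct]
        exact h1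
      obtain ⟨j, hy1, hji, hw2occ, hend⟩ := dec_one hx w₂ i₁ h h0
      refine ⟨j, ?_, by omega, ?_⟩
      · rw [hcons]
        exact (occursAt_cons y a w₂ j).mpr ⟨by rw [ha]; exact hy1, hw2occ⟩
      · have hwl : (w.length : ℤ) = (w₂.length : ℤ) + 1 := by
          rw [hcons]
          push_cast [List.length_cons]
          ring
        have hvl : (((1 :: w₂.flatMap Lzero).length : ℕ) : ℤ)
            = ((w₂.flatMap Lzero).length : ℤ) + 1 := by
          push_cast [List.length_cons]
          ring
        have harg : j + (w.length : ℤ) = j + 1 + (w₂.length : ℤ) := by omega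
        rw [harg]
        omega

end WithHx

end L0Aux

namespace L0Aux

section WithHx

variable {y x : ℤ → Fin 2} (hx : IsSubstImage Lzero y x)
include hx

lemma master (n : ℤ) (k : ℕ) (hΓ : IsAttractorZ x (Set.Icc n (n + (k : ℤ))))
    (lo hi : ℤ)
    (hlo : lo = bIdx y n - 1 ∨ lo = bIdx y n)
    (hhi : hi = bIdx y (n + (k : ℤ)) ∨ hi = bIdx y (n + (k : ℤ)) - 1)
    (hlo' : lo = bIdx y n → ¬(x (n - 1) = 0 ∧ x n = 0))
    (hhi' : hi = bIdx y (n + (k : ℤ)) - 1 → x (n + (k : ℤ)) = 0 ∧ x (n + (k : ℤ) + 1) = 1) :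
    IsAttractorZ y (Set.Icc lo hi) := by
  have hsn := bIdx_spec y n
  have hsk := bIdx_spec y (n + (k : ℤ))
  have hmm' : bIdx y n ≤ bIdx y (n + (k : ℤ)) := le_bIdx_of y (by omega)
  -- right-boundary facts
  have hRf : hi = bIdx y (n + (k : ℤ)) - 1 →
      blockStart Lzero y (bIdx y (n + (k : ℤ))) = n + (k : ℤ) ∧ y (bIdx y (n + (k : ℤ))) = 1 := by
    intro h
    obtain ⟨hxk, hxk1⟩ := hhi' h
    obtain ⟨r, hr⟩ := (x_zero_iff hx _).mp hxk
    have hbr := bStart_succ Lzero y r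
    have hlr := lz_len (y r)
    have hr2 : bIdx y (n + (k : ℤ)) = r := bIdx_unique y (le_of_eq hr) (by omega)
    have hB : blockStart Lzero y (bIdx y (n + (k : ℤ))) = n + (k : ℤ) := by rw [hr2, hr]
    refine ⟨hB, ?_⟩
    rcases fin2 (y (bIdx y (n + (k : ℤ)))) with h0 | h1
    · exfalso
      have hsucc := bStart_succ0 (y := y) h0
      have hx0 := x_bStart hx (bIdx y (n + (k : ℤ)) + 1)
      rw [hsucc, hB] at hx0
      rw [hxk1] at hx0
      exact absurd hx0 (by decide)
    · exact h1
  -- degenerate-case contradiction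
  have hfix : lo = bIdx y n → hi = bIdx y (n + (k : ℤ)) - 1 →
      bIdx y (n + (k : ℤ)) = bIdx y n → False := by
    intro h1 h2 h3
    obtain ⟨hB, hy1⟩ := hRf h2
    have hk0 : (k : ℤ) = 0 := by
      have := hsn.1
      rw [h3] at hB
      omega
    have hxn : x n = 0 := by
      have h4 := x_bStart hx (bIdx y (n + (k : ℤ)))
      rw [hB] at h4
      rw [hk0, add_zero] at h4
      exact h4
    have hxn1 : x (n + 1) = 1 := by
      have h4 := x_block1 hx hy1
      rw [hB, hk0, add_zero] at h4
      exact h4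
    have hne := hlo' h1
    have hxm1 : x (n - 1) = 1 := by
      rcases fin2 (x (n - 1)) with h' | h'
      · exact absurd ⟨h', hxn⟩ hne
      · exact h'
    obtain ⟨i₂, hocc, p₂, hp₂, hc1, hc2⟩ :=
      hΓ [1] (by simp) ⟨n + 1, (occursAt_single x 1 _).mpr hxn1⟩
    rw [Set.mem_Icc, hk0, add_zero] at hp₂
    have hl1 : (([1] : List (Fin 2)).length : ℤ) = 1 := rfl
    rw [hl1] at hc2
    have hi2 : i₂ = n := by omega
    rw [hi2] at hocc
    have := (occursAt_single x 1 n).mp hocc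
    rw [this] at hxn
    exact absurd hxn (by decide)
  -- main argument
  intro w hw hfac
  obtain ⟨j₀, hj₀⟩ := hfac
  obtain ⟨a, w₂, hcons⟩ := List.exists_cons_of_ne_nil hw
  rcases List.eq_nil_or_concat w with hnil | ⟨w₁, b, hcat⟩
  · exact absurd hnil hw
  rw [List.concat_eq_append] at hcat
  have hwlen : 1 ≤ (w.length : ℤ) := by
    rw [hcons]
    push_cast [List.length_cons]
    omega
  obtain ⟨v, off, tl, P1, P2, P3, P4, P5, P6⟩ := pack_lemma hx w a b w₂ w₁ hcons hcat
  obtain ⟨i₁, hvocc, p, hpmem, hip1, hip2⟩ := hΓ v P3 ⟨_, P4 j₀ hj₀⟩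
  rw [Set.mem_Icc] at hpmem
  obtain ⟨j, hywj, hji, hjend⟩ := P5 i₁ hvocc
  obtain ⟨hq1, hq2⟩ := bIdx_spec y p
  have hoff : 0 ≤ off := by rcases P1 with ⟨h', _⟩ | ⟨h', _⟩ <;> omega
  have hmq : bIdx y n ≤ bIdx y p := le_bIdx_of y (by omega)
  have hqm' : bIdx y p ≤ bIdx y (n + (k : ℤ)) := by
    have := bIdx_lt_of y (show p < blockStart Lzero y (bIdx y (n + (k : ℤ)) + 1) by omega)
    omega
  have hjq : j ≤ bIdx y p := le_bIdx_of y (by omega)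
  have hqjw : bIdx y p ≤ j + (w.length : ℤ) + tl - 1 := by
    rcases P2 with h' | h'
    · have h1 : p < blockStart Lzero y (j + (w.length : ℤ)) := by omega
      have := bIdx_lt_of y h1
      omega
    · have hb1 := bStart_succ Lzero y (j + (w.length : ℤ))
      have hl1 := lz_len (y (j + (w.length : ℤ)))
      have h1 : p < blockStart Lzero y (j + (w.length : ℤ) + 1) := by omega
      have := bIdx_lt_of y h1
      omega
  have hlo2 : lo ≤ bIdx y n := by rcases hlo with h' | h' <;> omega
  have hhi2 : bIdx y (n + (k : ℤ)) - 1 ≤ hi := by rcases hhi with h' | h' <;> omega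
  by_cases hchoose : bIdx y p ≤ hi ∧ bIdx y p ≤ j + (w.length : ℤ) - 1
  · exact ⟨j, hywj, bIdx y p, Set.mem_Icc.mpr ⟨by omega, hchoose.1⟩, hjq, by omega⟩
  · have hcase : hi < bIdx y p ∨ j + (w.length : ℤ) - 1 < bIdx y p := by
      rw [not_and_or] at hchoose
      rcases hchoose with h' | h' <;> [left; right] <;> omega
    have hAfacts : hi < bIdx y p →
        hi = bIdx y (n + (k : ℤ)) - 1 ∧ bIdx y p = bIdx y (n + (k : ℤ)) ∧ p = n + (k : ℤ) := by
      intro h'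
      have h2 : hi = bIdx y (n + (k : ℤ)) - 1 := by
        rcases hhi with h'' | h''
        · omega
        · exact h''
      obtain ⟨hB, hy1⟩ := hRf h2
      have hqe : bIdx y p = bIdx y (n + (k : ℤ)) := by omega
      have hpe : p = n + (k : ℤ) := by
        rw [hqe, hB] at hq1
        omega
      exact ⟨h2, hqe, hpe⟩
    have hBfacts : j + (w.length : ℤ) - 1 < bIdx y p →
        tl = 1 ∧ bIdx y p = j + (w.length : ℤ) ∧
          p = blockStart Lzero y (j + (w.length : ℤ)) := by
      intro h'
      have htl : tl = 1 := by rcases P2 with h'' | h'' <;> omega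
      have hqe : bIdx y p = j + (w.length : ℤ) := by omega
      have hpe : p = blockStart Lzero y (j + (w.length : ℤ)) := by
        rw [hqe] at hq1
        omega
      exact ⟨htl, hqe, hpe⟩
    have hα : j + 1 ≤ bIdx y p := by
      rcases hcase with h' | h'
      · obtain ⟨h2, hqe, hpe⟩ := hAfacts h'
        obtain ⟨hB, hy1⟩ := hRf h2
        by_contra hc
        have hqj : bIdx y p = j := by omega
        rcases P1 with ⟨ho, ha⟩ | ⟨ho, ha⟩
        · have hyj : y j = 0 := by
            rw [hcons] at hywj
            have := ((occursAt_cons y a w₂ j).mp hywj).1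
            rw [ha] at this
            exact this
          rw [show j = bIdx y (n + (k : ℤ)) by omega, hy1] at hyj
          exact absurd hyj (by decide)
        · have hBj : blockStart Lzero y j = p := by
            rw [show j = bIdx y (n + (k : ℤ)) by omega, hB, hpe]
          omega
      · omega
    have hβ : lo + 1 ≤ bIdx y p := by
      rcases hlo with hl | hl
      · omega
      · by_contra hc
        have hqm : bIdx y p = bIdx y n := by omega
        rcases hcase with h' | h'
        · obtain ⟨h2, hqe, hpe⟩ := hAfacts h'
          exact hfix hl h2 (by omega)
        · obtain ⟨htl, hqe, hpe⟩ := hBfacts h'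
          have hpn : p = n := by
            have h3 : blockStart Lzero y (bIdx y p) ≤ n := by rw [hqm]; exact hsn.1
            rw [← hqe] at hpe
            omega
          have hxn : x n = 0 := by
            rw [← hpn, hpe]
            exact x_bStart hx _
          have hne := hlo' hl
          have hxm1 : x (n - 1) = 1 := by
            rcases fin2 (x (n - 1)) with h'' | h''
            · exact absurd ⟨h'', hxn⟩ hne
            · exact h''
          have h6 := P6 htl i₁ hvocc
          have harg : i₁ + (v.length : ℤ) - 2 = n - 1 := by omega
          rw [harg, hxm1] at h6
          exact absurd h6 (by decide)
    exact ⟨j, hywj, bIdx y p - 1, Set.mem_Icc.mpr ⟨by omega, by omega⟩, by omega, by omega⟩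

end WithHx

end L0Aux

/-- Pre-image of an interval string attractor under `L₀`. -/
theorem preimage_attractor_Lzero (y x : ℤ → Fin 2) (hx : IsSubstImage Lzero y x)
    (n : ℤ) (k : ℕ) (hΓ : IsAttractorZ x (Set.Icc n (n + (k : ℤ)))) :
    ∃ m ℓ : ℤ,
      ℓ = (k : ℤ) - ((subwordZ x (n + 1) k).count 1 : ℤ) ∧
      substPreimage Lzero y (Set.Icc n (n + (k : ℤ))) = Set.Icc m (m + ℓ) ∧
      IsAttractorZ y (Set.Icc (m - 1) (m + ℓ)) ∧
      (¬(x (n - 1) = 0 ∧ x n = 0) → IsAttractorZ y (Set.Icc m (m + ℓ))) ∧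
      ((x (n + (k : ℤ)) = 0 ∧ x (n + (k : ℤ) + 1) = 1) →
        IsAttractorZ y (Set.Icc (m - 1) (m + ℓ - 1))) ∧
      (¬(x (n - 1) = 0 ∧ x n = 0) ∧ (x (n + (k : ℤ)) = 0 ∧ x (n + (k : ℤ) + 1) = 1) →
        IsAttractorZ y (Set.Icc m (m + ℓ - 1))) := by
  have hcount := L0Aux.count_formula hx n k
  refine ⟨L0Aux.bIdx y n, (k : ℤ) - ((subwordZ x (n + 1) k).count 1 : ℤ), rfl, ?_, ?_, ?_, ?_, ?_⟩
  · rw [L0Aux.preimage_Icc y n k, ← show L0Aux.bIdx y n + ((k : ℤ) -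
      ((subwordZ x (n + 1) k).count 1 : ℤ)) = L0Aux.bIdx y (n + (k : ℤ)) from by omega]
  · rw [show L0Aux.bIdx y n + ((k : ℤ) -
      ((subwordZ x (n + 1) k).count 1 : ℤ)) = L0Aux.bIdx y (n + (k : ℤ)) from by omega]
    exact L0Aux.master hx n k hΓ _ _ (Or.inl rfl) (Or.inl rfl)
      (fun h => absurd h (by omega)) (fun h => absurd h (by omega))
  · intro h1
    rw [show L0Aux.bIdx y n + ((k : ℤ) -
      ((subwordZ x (n + 1) k).count 1 : ℤ)) = L0Aux.bIdx y (n + (k : ℤ)) from by omega]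
    exact L0Aux.master hx n k hΓ _ _ (Or.inr rfl) (Or.inl rfl)
      (fun _ => h1) (fun h => absurd h (by omega))
  · intro h2
    rw [show L0Aux.bIdx y n + ((k : ℤ) -
      ((subwordZ x (n + 1) k).count 1 : ℤ)) - 1 = L0Aux.bIdx y (n + (k : ℤ)) - 1 from by omega]
    exact L0Aux.master hx n k hΓ _ _ (Or.inl rfl) (Or.inr rfl)
      (fun h => absurd h (by omega)) (fun _ => h2)
  · rintro ⟨h1, h2⟩
    rw [show L0Aux.bIdx y n + ((k : ℤ) -
      ((subwordZ x (n + 1) k).count 1 : ℤ)) - 1 = L0Aux.bIdx y (n + (k : ℤ)) - 1 from by omega]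
    exact L0Aux.master hx n k hΓ _ _ (Or.inr rfl) (Or.inr rfl)
      (fun _ => h1) (fun _ => h2)
end
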